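/- arXiv:1210.3092 — 8 statements merged into one kernel-verified Lean document; each statement's English description precedes it below -/
import Mathlib

section
/- (Hodge decomposition) Let C', C, C'' be finite-dimensional real inner product spaces and d : C' → C, e : C → C'' linear maps with e ∘ d = 0, with adjoints d*, e* and Laplacian Δ = d ∘ d* + e* ∘ e. Then C is the internal direct sum of range d, ker Δ, and range e*, and these three subspaces are pairwise orthogonal. -/
/-- Hodge decomposition: For one degree of a chain complex of
finite-dimensional real inner product spaces, `d : C' → C`, `e : C → C''` with
`e ∘ d = 0` and Laplacian `Δ = d ∘ d* + e* ∘ e`, the space `C` is the internal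
direct sum of `range d`, `ker Δ` and `range e*`, and these three subspaces are
pairwise orthogonal. -/
theorem stmt2 {C' C C'' : Type*}
    [NormedAddCommGroup C'] [InnerProductSpace ℝ C'] [FiniteDimensional ℝ C']
    [NormedAddCommGroup C] [InnerProductSpace ℝ C] [FiniteDimensional ℝ C]
    [NormedAddCommGroup C''] [InnerProductSpace ℝ C''] [FiniteDimensional ℝ C'']
    (d : C' →ₗ[ℝ] C) (e : C →ₗ[ℝ] C'') (hde : e.comp d = 0) :
    DirectSum.IsInternal
      (![LinearMap.range d,
         LinearMap.ker (d ∘ₗ LinearMap.adjoint d + LinearMap.adjoint e ∘ₗ e),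
         LinearMap.range (LinearMap.adjoint e)] : Fin 3 → Submodule ℝ C) ∧
    ∀ i j : Fin 3, i ≠ j →
      ∀ x ∈ (![LinearMap.range d,
         LinearMap.ker (d ∘ₗ LinearMap.adjoint d + LinearMap.adjoint e ∘ₗ e),
         LinearMap.range (LinearMap.adjoint e)] : Fin 3 → Submodule ℝ C) i,
      ∀ y ∈ (![LinearMap.range d,
         LinearMap.ker (d ∘ₗ LinearMap.adjoint d + LinearMap.adjoint e ∘ₗ e),
         LinearMap.range (LinearMap.adjoint e)] : Fin 3 → Submodule ℝ C) j,
        (inner ℝ x y : ℝ) = 0 := by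
  set V : Fin 3 → Submodule ℝ C :=
    ![LinearMap.range d,
      LinearMap.ker (d ∘ₗ LinearMap.adjoint d + LinearMap.adjoint e ∘ₗ e),
      LinearMap.range (LinearMap.adjoint e)] with hV
  -- kernel of the Laplacian is contained in ker d* and ker e
  have hker : ∀ x, (d ∘ₗ LinearMap.adjoint d + LinearMap.adjoint e ∘ₗ e) x = 0 →
      LinearMap.adjoint d x = 0 ∧ e x = 0 := by
    intro x hx
    have h0 : (inner ℝ x ((d ∘ₗ LinearMap.adjoint d + LinearMap.adjoint e ∘ₗ e) x) : ℝ) = 0 := by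
      rw [hx]; simp
    have h1 : (inner ℝ x (d (LinearMap.adjoint d x)) : ℝ)
        = inner ℝ (LinearMap.adjoint d x) (LinearMap.adjoint d x) := by
      rw [← LinearMap.adjoint_inner_left]
    have h2 : (inner ℝ x (LinearMap.adjoint e (e x)) : ℝ) = inner ℝ (e x) (e x) := by
      rw [LinearMap.adjoint_inner_right]
    have hsum : (inner ℝ (LinearMap.adjoint d x) (LinearMap.adjoint d x) : ℝ)
        + inner ℝ (e x) (e x) = 0 := by
      rw [← h1, ← h2, ← inner_add_right]
      simpa using h0
    have ha : (0:ℝ) ≤ inner ℝ (LinearMap.adjoint d x) (LinearMap.adjoint d x) :=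
      real_inner_self_nonneg
    have hb : (0:ℝ) ≤ inner ℝ (e x) (e x) := real_inner_self_nonneg
    constructor
    · have : (inner ℝ (LinearMap.adjoint d x) (LinearMap.adjoint d x) : ℝ) = 0 := by linarith
      exact inner_self_eq_zero.mp this
    · have : (inner ℝ (e x) (e x) : ℝ) = 0 := by linarith
      exact inner_self_eq_zero.mp this
  -- pairwise orthogonality
  have horth : ∀ i j : Fin 3, i ≠ j → ∀ x ∈ V i, ∀ y ∈ V j, (inner ℝ x y : ℝ) = 0 := by
    have h01 : ∀ x ∈ V 0, ∀ y ∈ V 1, (inner ℝ x y : ℝ) = 0 := by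
      rintro x hx y hy
      obtain ⟨a, rfl⟩ := hx
      have := (hker y hy).1
      rw [← LinearMap.adjoint_inner_right, this, inner_zero_right]
    have h02 : ∀ x ∈ V 0, ∀ y ∈ V 2, (inner ℝ x y : ℝ) = 0 := by
      rintro x hx y hy
      obtain ⟨a, rfl⟩ := hx
      obtain ⟨b, rfl⟩ := hy
      rw [LinearMap.adjoint_inner_right]
      have : e (d a) = 0 := by
        have := congrArg (fun f => f a) hde; simpa using this
      rw [this, inner_zero_left]
    have h12 : ∀ x ∈ V 1, ∀ y ∈ V 2, (inner ℝ x y : ℝ) = 0 := by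
      rintro x hx y hy
      obtain ⟨b, rfl⟩ := hy
      rw [LinearMap.adjoint_inner_right, (hker x hx).2, inner_zero_left]
    intro i j hij x hx y hy
    fin_cases i <;> fin_cases j <;> simp at hij <;>
      first
        | exact h01 x hx y hy
        | exact h02 x hx y hy
        | exact h12 x hx y hy
        | (rw [real_inner_comm]; first
            | exact h01 y hy x hx
            | exact h02 y hy x hx
            | exact h12 y hy x hx)
  have hOF : OrthogonalFamily ℝ (fun i => V i) (fun i => (V i).subtypeₗᵢ) := by
    intro i j hij u v
    exact horth i j hij u u.2 v v.2
  refine ⟨?_, horth⟩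
  rw [hOF.isInternal_iff]
  rw [Submodule.eq_bot_iff]
  intro x hx
  have hmem : ∀ i : Fin 3, ∀ y ∈ V i, (inner ℝ y x : ℝ) = 0 := by
    intro i y hy
    exact hx y (Submodule.mem_iSup_of_mem i hy)
  have hd' : LinearMap.adjoint d x = 0 := by
    apply ext_inner_left ℝ
    intro a
    rw [inner_zero_right, LinearMap.adjoint_inner_right]
    exact hmem 0 (d a) ⟨a, rfl⟩
  have he' : e x = 0 := by
    apply ext_inner_left ℝ
    intro b
    rw [inner_zero_right, ← LinearMap.adjoint_inner_left]
    exact hmem 2 (LinearMap.adjoint e b) ⟨b, rfl⟩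
  have hxker : x ∈ V 1 := by
    show x ∈ LinearMap.ker _
    rw [LinearMap.mem_ker]
    simp [hd', he']
  have := hmem 1 x hxker
  exact inner_self_eq_zero.mp this
end

section
/- Let C', C, C'' be finite-dimensional real inner product spaces and d : C' → C, e : C → C'' linear maps with e ∘ d = 0, with adjoints d*, e* and Laplacian Δ = d ∘ d* + e* ∘ e. Since range d ⊆ ker e, the quotient homology space H = ker e / range d is defined, and the composition of the inclusion ker Δ ↪ ker e with the quotient map ker e → ker e / range d is a linear isomorphism from ker Δ onto ker e / range d. -/
open LinearMap Submodule


/-- For one degree of a chain complex of finite-dimensional real inner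
product spaces `d : C' → C`, `e : C → C''` with `e ∘ d = 0`, Laplacian
`Δ = d ∘ d* + e* ∘ e`: the kernel of `Δ` is contained in `ker e`, and the composition
of the inclusion `ker Δ ↪ ker e` with the quotient map `ker e → ker e / range d`
is a linear isomorphism (i.e. bijective). -/
theorem stmt3 {C' C C'' : Type*}
    [NormedAddCommGroup C'] [InnerProductSpace ℝ C'] [FiniteDimensional ℝ C']
    [NormedAddCommGroup C] [InnerProductSpace ℝ C] [FiniteDimensional ℝ C]
    [NormedAddCommGroup C''] [InnerProductSpace ℝ C''] [FiniteDimensional ℝ C'']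
    (d : C' →ₗ[ℝ] C) (e : C →ₗ[ℝ] C'') (hde : e.comp d = 0) :
    ∃ h : LinearMap.ker (d ∘ₗ LinearMap.adjoint d + LinearMap.adjoint e ∘ₗ e) ≤
        LinearMap.ker e,
      Function.Bijective
        (((LinearMap.range d).comap (LinearMap.ker e).subtype).mkQ.comp
          (Submodule.inclusion h)) := by
  have key : ∀ x : C, x ∈ LinearMap.ker (d ∘ₗ adjoint d + adjoint e ∘ₗ e) ↔
      adjoint d x = 0 ∧ e x = 0 := by
    intro x
    constructor
    · intro hx
      simp only [LinearMap.mem_ker, LinearMap.add_apply, LinearMap.comp_apply] at hx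
      have h0 : (inner ℝ (d (adjoint d x) + adjoint e (e x)) x : ℝ) = 0 := by
        rw [hx]; simp
      rw [inner_add_left] at h0
      have e1 : (inner ℝ (d (adjoint d x)) x : ℝ) = ‖adjoint d x‖ ^ 2 := by
        rw [← LinearMap.adjoint_inner_right d (adjoint d x) x, real_inner_self_eq_norm_sq]
      have e2 : (inner ℝ ((adjoint e) (e x)) x : ℝ) = ‖e x‖ ^ 2 := by
        rw [LinearMap.adjoint_inner_left, real_inner_self_eq_norm_sq]
      rw [e1, e2] at h0
      constructor
      · have : ‖adjoint d x‖ ^ 2 = 0 := by nlinarith [sq_nonneg ‖e x‖]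
        exact norm_eq_zero.mp (pow_eq_zero_iff (by norm_num : 2 ≠ 0) |>.mp this)
      · have : ‖e x‖ ^ 2 = 0 := by nlinarith [sq_nonneg ‖adjoint d x‖]
        exact norm_eq_zero.mp (pow_eq_zero_iff (by norm_num : 2 ≠ 0) |>.mp this)
    · rintro ⟨h1, h2⟩
      simp [LinearMap.mem_ker, h1, h2]
  have h : LinearMap.ker (d ∘ₗ adjoint d + adjoint e ∘ₗ e) ≤ LinearMap.ker e :=
    fun x hx => (key x).mp hx |>.2
  refine ⟨h, ?_, ?_⟩
  · rw [← LinearMap.ker_eq_bot, LinearMap.ker_eq_bot']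
    intro m hm
    have hmem : (m : C) ∈ LinearMap.range d := by
      have := (Submodule.Quotient.mk_eq_zero _).mp hm
      simpa [Submodule.mem_comap] using this
    obtain ⟨y, hy⟩ := hmem
    have hd : adjoint d (m : C) = 0 := ((key _).mp m.2).1
    have hm0 : ‖(m : C)‖ ^ 2 = 0 := by
      rw [← real_inner_self_eq_norm_sq]
      calc (inner ℝ (m : C) (m : C) : ℝ) = inner ℝ (d y) (m : C) := by rw [hy]
        _ = inner ℝ y (adjoint d (m : C)) :=
            (LinearMap.adjoint_inner_right d y (m : C)).symm
        _ = 0 := by rw [hd]; simp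
    have : (m : C) = 0 :=
      norm_eq_zero.mp (pow_eq_zero_iff (by norm_num : 2 ≠ 0) |>.mp hm0)
    exact Subtype.ext this
  · intro q
    obtain ⟨x, rfl⟩ := Submodule.Quotient.mk_surjective _ q
    obtain ⟨p, hp, z, hz, hxz⟩ := Submodule.exists_add_mem_mem_orthogonal
      (K := LinearMap.range d) (x : C)
    obtain ⟨y, hy⟩ := hp
    have hdz : adjoint d z = 0 := by
      have h2 : ∀ w : C', (inner ℝ w (adjoint d z) : ℝ) = 0 := fun w => by
        rw [LinearMap.adjoint_inner_right]
        exact hz (d w) ⟨w, rfl⟩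
      have := h2 (adjoint d z)
      rwa [real_inner_self_eq_norm_sq, pow_eq_zero_iff (by norm_num : 2 ≠ 0),
        norm_eq_zero] at this
    have hez : e z = 0 := by
      have hex : e (x : C) = 0 := x.2
      have hep : e p = 0 := by
        rw [← hy]; exact congrFun (congrArg DFunLike.coe hde) y
      have heq : e (x : C) = e p + e z := by rw [hxz]; simp
      rw [hex, hep, zero_add] at heq
      exact heq.symm
    have hzker : z ∈ LinearMap.ker (d ∘ₗ adjoint d + adjoint e ∘ₗ e) :=
      (key z).mpr ⟨hdz, hez⟩
    refine ⟨⟨z, hzker⟩, ?_⟩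
    simp only [LinearMap.comp_apply, Submodule.mkQ_apply]
    rw [Submodule.Quotient.eq]
    refine Submodule.mem_comap.mpr ?_
    have hcoe : (((Submodule.inclusion h ⟨z, hzker⟩ - x : LinearMap.ker e)) : C) = -p := by
      show z - (x : C) = -p
      rw [hxz]; abel
    refine ⟨-y, ?_⟩
    simp only [map_neg, hy, Submodule.coe_subtype]
    exact hcoe.symm
end

section
/- (Uniqueness of the interval decomposition) Let κ be a field. Suppose V is the direct sum of interval persistence modules I[r_1,∞], …, I[r_p,∞], I[m_1, m_1+n_1], …, I[m_q, m_q+n_q] and V' is the direct sum of I[r'_1,∞], …, I[r'_{p'},∞], I[m'_1, m'_1+n'_1], …, I[m'_{q'}, m'_{q'}+n'_{q'}]. If V and V' are isomorphic as persistence vector spaces, then p = p', q = q', and after suitable permutations r_i = r'_i for all i and (m_j, n_j) = (m'_j, n'_j) for all j; equivalently, the multiset of intervals {[r_i,∞]} ∪ {[m_j, m_j+n_j]} equals the multiset {[r'_i,∞]} ∪ {[m'_j, m'_j+n'_j]}. -/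
open scoped Classical

/-- A persistence vector space over a field `κ`: a family of `κ`-vector spaces `V n`
(`n ∈ ℕ`) together with linear structure maps `φ n : V n → V (n+1)`. -/
structure PersistenceVS (κ : Type) [Field κ] : Type 1 where
  V : ℕ → Type
  instAdd : ∀ n, AddCommGroup (V n)
  instMod : ∀ n, Module κ (V n)
  φ : ∀ n, V n →ₗ[κ] V (n + 1)

attribute [instance] PersistenceVS.instAdd PersistenceVS.instMod

/-- A morphism of persistence vector spaces: a family of linear maps commuting with
the structure maps. -/
structure PersistenceHom {κ : Type} [Field κ] (U W : PersistenceVS κ) where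
  ω : ∀ n, U.V n →ₗ[κ] W.V n
  comm : ∀ n, (W.φ n).comp (ω n) = (ω (n + 1)).comp (U.φ n)

/-- Two persistence vector spaces are isomorphic iff there is a morphism all of whose
components are bijective. -/
def PersistenceVS.Isomorphic {κ : Type} [Field κ] (U W : PersistenceVS κ) : Prop :=
  ∃ f : PersistenceHom U W, ∀ n, Function.Bijective (f.ω n)

/-- A persistence vector space is tame iff each component is finite dimensional and
the structure maps are isomorphisms for all sufficiently large `n`. -/
def PersistenceVS.Tame {κ : Type} [Field κ] (V : PersistenceVS κ) : Prop :=
  (∀ n, FiniteDimensional κ (V.V n)) ∧ ∃ N, ∀ n, N ≤ n → Function.Bijective (V.φ n)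

/-- The `n`-th component of the interval persistence module `I[a,b]`, realized as the
submodule `⊤` of `κ` when `a ≤ n ≤ b` and `⊥` otherwise. -/
noncomputable def intervalSub (κ : Type) [Field κ] (a : ℕ) (b : ℕ∞) (n : ℕ) :
    Submodule κ κ :=
  if a ≤ n ∧ (n : ℕ∞) ≤ b then ⊤ else ⊥

/-- The interval persistence module `I[a,b]`: component `κ` for `a ≤ n ≤ b` and `0`
otherwise, with structure maps the identity when `a ≤ n < b` and zero otherwise. -/
noncomputable def intervalModule (κ : Type) [Field κ] (a : ℕ) (b : ℕ∞) :
    PersistenceVS κ where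
  V n := ↥(intervalSub κ a b n)
  instAdd _ := inferInstance
  instMod _ := inferInstance
  φ n :=
    if h : intervalSub κ a b n ≤ intervalSub κ a b (n + 1) then Submodule.inclusion h
    else 0

/-- Direct sum (over a finite index type) of persistence vector spaces. -/
def directSumPVS {κ : Type} [Field κ] {ι : Type} [Fintype ι]
    (Vs : ι → PersistenceVS κ) : PersistenceVS κ where
  V n := ∀ k, (Vs k).V n
  instAdd _ := inferInstance
  instMod _ := inferInstance
  φ n := LinearMap.pi fun k => ((Vs k).φ n).comp (LinearMap.proj k)

/-- The composite structure map `φ_{i,j} : V i → V j` for `i ≤ j` (identity if `i = j`). -/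
noncomputable def PersistenceVS.phiLE {κ : Type} [Field κ] (V : PersistenceVS κ)
    {i j : ℕ} (h : i ≤ j) : V.V i →ₗ[κ] V.V j :=
  Nat.leRecOn h (fun {k} g => (V.φ k).comp g) LinearMap.id
section Aux
open Function

variable {κ : Type} [Field κ]

theorem phiLE_self (V : PersistenceVS κ) (i : ℕ) :
    V.phiLE (le_refl i) = LinearMap.id :=
  Nat.leRecOn_self _

theorem phiLE_succ (V : PersistenceVS κ) {i j : ℕ} (h : i ≤ j) (h' : i ≤ j + 1) :
    V.phiLE h' = (V.φ j).comp (V.phiLE h) :=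
  Nat.leRecOn_succ h _

theorem phiLE_bijective (V : PersistenceVS κ) {i j : ℕ} (h : i ≤ j)
    (hb : ∀ n, i ≤ n → n < j → Bijective (V.φ n)) : Bijective (V.phiLE h) := by
  induction j, h using Nat.le_induction with
  | base => rw [phiLE_self]; exact bijective_id
  | succ j h ih =>
    rw [phiLE_succ V h]
    rw [LinearMap.coe_comp]
    exact (hb j h (Nat.lt_succ_self j)).comp
      (ih fun n h1 h2 => hb n h1 (h2.trans (Nat.lt_succ_self j)))

theorem hom_comm_phiLE {U W : PersistenceVS κ} (f : PersistenceHom U W) {i j : ℕ} (h : i ≤ j) :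
    (f.ω j).comp (U.phiLE h) = (W.phiLE h).comp (f.ω i) := by
  induction j, h using Nat.le_induction with
  | base => simp [phiLE_self]
  | succ j h ih =>
    rw [phiLE_succ U h, phiLE_succ W h, ← LinearMap.comp_assoc, ← f.comm j,
      LinearMap.comp_assoc, ih, LinearMap.comp_assoc]

noncomputable def pvsRank (V : PersistenceVS κ) (i j : ℕ) (h : i ≤ j) : ℕ :=
  Module.finrank κ (LinearMap.range (V.phiLE h))

theorem pvsRank_eq_of_iso {U W : PersistenceVS κ} (huw : U.Isomorphic W) (i j : ℕ)
    (hij : i ≤ j) : pvsRank U i j hij = pvsRank W i j hij := by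
  obtain ⟨f, hf⟩ := huw
  have h1 : LinearMap.range (W.phiLE hij) =
      Submodule.map (f.ω j) (LinearMap.range (U.phiLE hij)) := by
    calc LinearMap.range (W.phiLE hij)
        = LinearMap.range ((W.phiLE hij).comp (f.ω i)) := by
          rw [LinearMap.range_comp, LinearMap.range_eq_top.mpr (hf i).2, Submodule.map_top]
      _ = LinearMap.range ((f.ω j).comp (U.phiLE hij)) := by rw [hom_comm_phiLE f hij]
      _ = Submodule.map (f.ω j) (LinearMap.range (U.phiLE hij)) := LinearMap.range_comp _ _
  unfold pvsRank
  rw [h1]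
  exact (Submodule.equivMapOfInjective _ (hf j).1 (LinearMap.range (U.phiLE hij))).finrank_eq

end Aux
section Aux2
open Function

variable {κ : Type} [Field κ]

theorem intervalSub_eq_top {a : ℕ} {b : ℕ∞} {n : ℕ} (h1 : a ≤ n) (h2 : (n : ℕ∞) ≤ b) :
    intervalSub κ a b n = ⊤ := if_pos ⟨h1, h2⟩

theorem intervalSub_eq_bot {a : ℕ} {b : ℕ∞} {n : ℕ} (h : ¬(a ≤ n ∧ (n : ℕ∞) ≤ b)) :
    intervalSub κ a b n = ⊥ := if_neg h

theorem intervalModule_phi_bijective {a : ℕ} {b : ℕ∞} {n : ℕ}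
    (h1 : a ≤ n) (h2 : ((n + 1 : ℕ) : ℕ∞) ≤ b) :
    Bijective ((intervalModule κ a b).φ n) := by
  have e1 : intervalSub κ a b n = ⊤ :=
    intervalSub_eq_top h1 (le_trans (by exact_mod_cast Nat.le_succ n) h2)
  have e2 : intervalSub κ a b (n + 1) = ⊤ := intervalSub_eq_top (h1.trans (Nat.le_succ n)) h2
  have hle : intervalSub κ a b n ≤ intervalSub κ a b (n + 1) := by rw [e1, e2]
  have hphi : (intervalModule κ a b).φ n = Submodule.inclusion hle := dif_pos hle
  rw [hphi]
  constructor
  · exact Submodule.inclusion_injective hle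
  · rintro ⟨y, hy⟩
    exact ⟨⟨y, by rw [e1]; trivial⟩, rfl⟩

theorem rank_intervalModule (a : ℕ) (b : ℕ∞) (i j : ℕ) (hij : i ≤ j) :
    pvsRank (intervalModule κ a b) i j hij
      = if a ≤ i ∧ (j : ℕ∞) ≤ b then 1 else 0 := by
  by_cases hc : a ≤ i ∧ (j : ℕ∞) ≤ b
  · rw [if_pos hc]
    have hbij : Bijective ((intervalModule κ a b).phiLE hij) := by
      apply phiLE_bijective
      intro k hk1 hk2
      exact intervalModule_phi_bijective (hc.1.trans hk1)
        (le_trans (by exact_mod_cast hk2) hc.2)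
    unfold pvsRank
    rw [LinearMap.range_eq_top.mpr hbij.2, finrank_top]
    show Module.finrank κ ↥(intervalSub κ a b j) = 1
    rw [intervalSub_eq_top (hc.1.trans hij) hc.2, finrank_top, Module.finrank_self]
  · rw [if_neg hc]
    rcases not_and_or.mp hc with hc1 | hc2
    · -- domain is trivial
      have e1 : intervalSub κ a b i = ⊥ := intervalSub_eq_bot (fun h => hc1 h.1)
      haveI : Subsingleton ((intervalModule κ a b).V i) := by
        show Subsingleton ↥(intervalSub κ a b i)
        rw [e1]; infer_instance
      unfold pvsRank
      rw [Subsingleton.elim ((intervalModule κ a b).phiLE hij) 0, LinearMap.range_zero,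
        finrank_bot]
    · -- codomain is trivial
      have e1 : intervalSub κ a b j = ⊥ := intervalSub_eq_bot (fun h => hc2 h.2)
      haveI : Subsingleton ((intervalModule κ a b).V j) := by
        show Subsingleton ↥(intervalSub κ a b j)
        rw [e1]; infer_instance
      unfold pvsRank
      haveI : Subsingleton (LinearMap.range ((intervalModule κ a b).phiLE hij)) :=
        inferInstance
      exact Module.finrank_zero_of_subsingleton

end Aux2
section Aux3
open Function

variable {κ : Type} [Field κ]

theorem directSum_phiLE {ι : Type} [Fintype ι] (Vs : ι → PersistenceVS κ) {i j : ℕ}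
    (h : i ≤ j) :
    (directSumPVS Vs).phiLE h
      = LinearMap.pi fun k => ((Vs k).phiLE h).comp (LinearMap.proj k) := by
  induction j, h using Nat.le_induction with
  | base =>
    refine LinearMap.ext fun x => funext fun k => ?_
    simp only [phiLE_self]
    rfl
  | succ j h ih =>
    refine LinearMap.ext fun x => funext fun k => ?_
    rw [phiLE_succ (directSumPVS Vs) h, ih]
    simp only [phiLE_succ _ h]
    rfl

/-- linear equivalence between `Submodule.pi Set.univ p` and the pi type of submodules -/
noncomputable def piSubEquiv {ι : Type} (Ms : ι → Type) [∀ k, AddCommGroup (Ms k)]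
    [∀ k, Module κ (Ms k)] (p : ∀ k, Submodule κ (Ms k)) :
    (Submodule.pi Set.univ p) ≃ₗ[κ] ∀ k, (p k) where
  toFun x k := ⟨x.1 k, x.2 k (Set.mem_univ k)⟩
  map_add' x y := rfl
  map_smul' c x := rfl
  invFun y := ⟨fun k => (y k).1, fun k _ => (y k).2⟩
  left_inv x := rfl
  right_inv y := rfl

theorem range_piMap {ι : Type} (Ms Ns : ι → Type) [∀ k, AddCommGroup (Ms k)]
    [∀ k, Module κ (Ms k)] [∀ k, AddCommGroup (Ns k)] [∀ k, Module κ (Ns k)]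
    (f : ∀ k, Ms k →ₗ[κ] Ns k) :
    LinearMap.range (LinearMap.pi fun k => (f k).comp (LinearMap.proj k))
      = Submodule.pi Set.univ fun k => LinearMap.range (f k) := by
  ext x
  constructor
  · rintro ⟨y, rfl⟩ k _
    exact ⟨y k, rfl⟩
  · intro hx
    choose y hy using fun k => hx k (Set.mem_univ k)
    exact ⟨y, funext hy⟩

theorem pvsRank_directSum {ι : Type} [Fintype ι] (Vs : ι → PersistenceVS κ)
    [∀ k, ∀ nn : ℕ, FiniteDimensional κ ((Vs k).V nn)] {i j : ℕ} (h : i ≤ j) :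
    pvsRank (directSumPVS Vs) i j h = ∑ k, pvsRank (Vs k) i j h := by
  unfold pvsRank
  rw [directSum_phiLE Vs h]
  have hr := range_piMap (fun k => (Vs k).V i) (fun k => (Vs k).V j) (fun k => (Vs k).phiLE h)
  exact (LinearEquiv.ofEq _ _ hr).finrank_eq.trans <| ((piSubEquiv (fun k => (Vs k).V j)
    (fun k => LinearMap.range ((Vs k).phiLE h))).finrank_eq).trans
    (Module.finrank_pi_fintype κ)

end Aux3
section Aux4
open Multiset

/-- split the cardinality of a filtered multiset along a second predicate -/
theorem card_filter_split {α : Type*} (p q : α → Prop) [DecidablePred p] [DecidablePred q]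
    (s : Multiset α) :
    (s.filter p).card
      = (s.filter fun a => p a ∧ q a).card + (s.filter fun a => p a ∧ ¬ q a).card := by
  have h1 : s.filter (fun a => p a ∧ q a) = Multiset.filter q (s.filter p) := by
    rw [Multiset.filter_filter]
    exact Multiset.filter_congr fun a _ => and_comm
  have h2 : s.filter (fun a => p a ∧ ¬ q a) = Multiset.filter (fun a => ¬ q a) (s.filter p) := by
    rw [Multiset.filter_filter]
    exact Multiset.filter_congr fun a _ => and_comm
  rw [h1, h2, ← card_add, Multiset.filter_add_not]

theorem count_aux (M M' : Multiset (ℕ × ℕ∞)) (y : ℕ∞)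
    (h : ∀ i : ℕ, (M.filter fun s => s.1 ≤ i ∧ s.2 = y).card
      = (M'.filter fun s => s.1 ≤ i ∧ s.2 = y).card) :
    ∀ i : ℕ, M.count (i, y) = M'.count (i, y) := by
  have key : ∀ (N : Multiset (ℕ × ℕ∞)) (i : ℕ),
      (N.filter fun s => s.1 ≤ i ∧ s.2 = y).card
        = N.count (i, y) + (N.filter fun s => s.1 + 1 ≤ i ∧ s.2 = y).card := by
    intro N i
    rw [card_filter_split (fun s => s.1 ≤ i ∧ s.2 = y) (fun s => s.1 = i) N]
    congr 1
    · rw [Multiset.count_eq_card_filter_eq]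
      congr 1
      refine Multiset.filter_congr fun s _ => ?_
      constructor
      · rintro ⟨⟨_, h2⟩, h3⟩
        exact Prod.ext h3.symm h2.symm
      · rintro rfl
        exact ⟨⟨le_refl _, rfl⟩, rfl⟩
    · congr 1
      refine Multiset.filter_congr fun s _ => ?_
      constructor
      · rintro ⟨⟨h1, h2⟩, h3⟩
        exact ⟨by omega, h2⟩
      · rintro ⟨h1, h2⟩
        exact ⟨⟨by omega, h2⟩, by omega⟩
  intro i
  induction i with
  | zero =>
    have h0 := h 0
    rw [key M 0, key M' 0] at h0
    have hM : (M.filter fun s => s.1 + 1 ≤ 0 ∧ s.2 = y) = 0 := by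
      rw [Multiset.filter_eq_nil]
      intro s _ hs
      omega
    have hM' : (M'.filter fun s => s.1 + 1 ≤ 0 ∧ s.2 = y) = 0 := by
      rw [Multiset.filter_eq_nil]
      intro s _ hs
      omega
    rw [hM, hM'] at h0
    simpa using h0
  | succ i ih =>
    have hs := h (i + 1)
    rw [key M (i + 1), key M' (i + 1)] at hs
    have e : ∀ N : Multiset (ℕ × ℕ∞),
        (N.filter fun s => s.1 + 1 ≤ i + 1 ∧ s.2 = y)
          = (N.filter fun s => s.1 ≤ i ∧ s.2 = y) :=
      fun N => Multiset.filter_congr fun s _ => by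
        constructor <;> (rintro ⟨h1, h2⟩; exact ⟨by omega, h2⟩)
    rw [e M, e M'] at hs
    have hi := h i
    omega
end Aux4
section Aux5

theorem enat_eq_iff (c : ℕ) (d : ℕ∞) :
    ((c : ℕ∞) ≤ d ∧ ¬(((c + 1 : ℕ) : ℕ∞) ≤ d)) ↔ d = (c : ℕ∞) := by
  induction d using ENat.recTopCoe with
  | top =>
    simp
  | coe e =>
    rw [Nat.cast_le, Nat.cast_le, Nat.cast_inj]
    omega

theorem multiset_eq_of_counts (M M' : Multiset (ℕ × ℕ∞))
    (hM : ∀ s ∈ M, (s.1 : ℕ∞) ≤ s.2) (hM' : ∀ s ∈ M', (s.1 : ℕ∞) ≤ s.2)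
    (h : ∀ i j : ℕ, i ≤ j → (M.filter fun s => s.1 ≤ i ∧ (j : ℕ∞) ≤ s.2).card
      = (M'.filter fun s => s.1 ≤ i ∧ (j : ℕ∞) ≤ s.2).card) : M = M' := by
  obtain ⟨B, hB⟩ : ∃ B : ℕ, ∀ s ∈ M + M', ∀ c : ℕ, s.2 = (c : ℕ∞) → c < B := by
    refine ⟨((M + M').map fun s => s.2.toNat + 1).sum, ?_⟩
    intro s hs c hc
    have hmem : s.2.toNat + 1 ∈ (M + M').map fun s => s.2.toNat + 1 :=
      Multiset.mem_map_of_mem _ hs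
    have hle := Multiset.single_le_sum (fun x _ => Nat.zero_le x) _ hmem
    rw [hc, ENat.toNat_coe] at hle
    omega
  refine Multiset.ext.mpr fun a => ?_
  obtain ⟨x, y⟩ := a
  induction y using ENat.recTopCoe with
  | top =>
    refine count_aux M M' ⊤ (fun i => ?_) x
    have e : ∀ N : Multiset (ℕ × ℕ∞), (∀ s ∈ N, ∀ c : ℕ, s.2 = (c : ℕ∞) → c < B) →
        (N.filter fun s => s.1 ≤ i ∧ s.2 = (⊤ : ℕ∞))
          = (N.filter fun s => s.1 ≤ i ∧ ((max i B : ℕ) : ℕ∞) ≤ s.2) := by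
      intro N hN
      refine Multiset.filter_congr fun s hs => ?_
      constructor
      · rintro ⟨h1, h2⟩
        exact ⟨h1, h2 ▸ le_top⟩
      · rintro ⟨h1, h2⟩
        refine ⟨h1, ?_⟩
        by_contra hne
        have hex : ∀ d : ℕ∞, d ≠ ⊤ → ∃ cc : ℕ, d = (cc : ℕ∞) := fun d => by
          induction d using ENat.recTopCoe with
          | top => exact fun hd => absurd rfl hd
          | coe cc => exact fun _ => ⟨cc, rfl⟩
        obtain ⟨cc, hcc⟩ := hex s.2 hne
        have hcB := hN s hs cc hcc
        rw [hcc, Nat.cast_le] at h2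
        omega
    rw [e M (fun s hs => hB s (Multiset.mem_add.mpr (Or.inl hs))),
      e M' (fun s hs => hB s (Multiset.mem_add.mpr (Or.inr hs)))]
    exact h i (max i B) (le_max_left i B)
  | coe c =>
    by_cases hxc : x ≤ c
    · refine count_aux M M' (c : ℕ∞) (fun i => ?_) x
      -- reduce to i' = min i c
      have e : ∀ N : Multiset (ℕ × ℕ∞), (∀ s ∈ N, (s.1 : ℕ∞) ≤ s.2) →
          (N.filter fun s => s.1 ≤ i ∧ s.2 = (c : ℕ∞))
            = (N.filter fun s => s.1 ≤ min i c ∧ s.2 = (c : ℕ∞)) := by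
        intro N hN
        refine Multiset.filter_congr fun s hs => ?_
        constructor
        · rintro ⟨h1, h2⟩
          have := hN s hs
          rw [h2, Nat.cast_le] at this
          exact ⟨by omega, h2⟩
        · rintro ⟨h1, h2⟩
          exact ⟨by omega, h2⟩
      rw [e M hM, e M' hM']
      -- now use the splitting identity
      have key : ∀ N : Multiset (ℕ × ℕ∞),
          (N.filter fun s => s.1 ≤ min i c ∧ (c : ℕ∞) ≤ s.2).card
            = (N.filter fun s => s.1 ≤ min i c ∧ ((c + 1 : ℕ) : ℕ∞) ≤ s.2).card
              + (N.filter fun s => s.1 ≤ min i c ∧ s.2 = (c : ℕ∞)).card := by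
        intro N
        rw [card_filter_split (fun s => s.1 ≤ min i c ∧ (c : ℕ∞) ≤ s.2)
          (fun s => ((c + 1 : ℕ) : ℕ∞) ≤ s.2) N]
        congr 1
        · congr 1
          refine Multiset.filter_congr fun s _ => ?_
          constructor
          · rintro ⟨⟨h1, _⟩, h2⟩
            exact ⟨h1, h2⟩
          · rintro ⟨h1, h2⟩
            refine ⟨⟨h1, le_trans ?_ h2⟩, h2⟩
            exact_mod_cast Nat.le_succ c
        · congr 1
          refine Multiset.filter_congr fun s _ => ?_
          constructor
          · rintro ⟨⟨h1, h2⟩, h3⟩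
            exact ⟨h1, (enat_eq_iff c s.2).mp ⟨h2, h3⟩⟩
          · rintro ⟨h1, h2⟩
            have := (enat_eq_iff c s.2).mpr h2
            exact ⟨⟨h1, this.1⟩, this.2⟩
      have k1 := key M
      have k2 := key M'
      have e1 := h (min i c) c (min_le_right i c)
      have e2 := h (min i c) (c + 1) (le_trans (min_le_right i c) (Nat.le_succ c))
      omega
    · rw [Multiset.count_eq_zero.mpr, Multiset.count_eq_zero.mpr]
      · intro hmem
        have := hM' _ hmem
        rw [Nat.cast_le] at this
        omega
      · intro hmem
        have := hM _ hmem
        rw [Nat.cast_le] at this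
        omega
end Aux5
section Final

theorem card_filter_eq_pvsRank {κ : Type} [Field κ] {ι : Type} [Fintype ι]
    (e : ι → ℕ × ℕ∞) (i j : ℕ) (hij : i ≤ j) :
    ((Finset.univ.val.map e).filter fun s => s.1 ≤ i ∧ (j : ℕ∞) ≤ s.2).card
      = pvsRank (directSumPVS fun k => intervalModule κ (e k).1 (e k).2) i j hij := by
  haveI : ∀ (k : ι) (nn : ℕ),
      FiniteDimensional κ ((intervalModule κ (e k).1 (e k).2).V nn) := fun k nn =>
    (inferInstance : FiniteDimensional κ ↥(intervalSub κ (e k).1 (e k).2 nn))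
  rw [pvsRank_directSum]
  calc ((Finset.univ.val.map e).filter fun s => s.1 ≤ i ∧ (j : ℕ∞) ≤ s.2).card
      = Multiset.countP (fun s => s.1 ≤ i ∧ (j : ℕ∞) ≤ s.2) (Finset.univ.val.map e) :=
        (Multiset.countP_eq_card_filter _ _).symm
    _ = (Finset.univ.val.filter fun k => (e k).1 ≤ i ∧ (j : ℕ∞) ≤ (e k).2).card :=
        Multiset.countP_map e Finset.univ.val _
    _ = (Finset.univ.filter fun k => (e k).1 ≤ i ∧ (j : ℕ∞) ≤ (e k).2).card := rfl
    _ = ∑ k, if (e k).1 ≤ i ∧ (j : ℕ∞) ≤ (e k).2 then 1 else 0 := Finset.card_filter _ _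
    _ = ∑ k, pvsRank (intervalModule κ (e k).1 (e k).2) i j hij :=
        Finset.sum_congr rfl fun k _ => (rank_intervalModule (e k).1 (e k).2 i j hij).symm

end Final
/-- uniqueness of the interval decomposition: If two finite direct sums
of interval modules are isomorphic as persistence vector spaces, then the multisets of
intervals (recorded as pairs `(left end, right end)` in `ℕ × ℕ∞`) coincide; in
particular `p = p'`, `q = q'` and the interval data agree up to permutation. -/
theorem stmt11 {κ : Type} [Field κ] (p q p' q' : ℕ)
    (r : Fin p → ℕ) (m n : Fin q → ℕ) (r' : Fin p' → ℕ) (m' n' : Fin q' → ℕ)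
    (hiso :
      (directSumPVS (Sum.elim
        (fun i : Fin p => intervalModule κ (r i) ⊤)
        (fun j : Fin q => intervalModule κ (m j) ((m j + n j : ℕ) : ℕ∞)))).Isomorphic
      (directSumPVS (Sum.elim
        (fun i : Fin p' => intervalModule κ (r' i) ⊤)
        (fun j : Fin q' => intervalModule κ (m' j) ((m' j + n' j : ℕ) : ℕ∞))))) :
    (Finset.univ.val.map fun i : Fin p => ((r i : ℕ), (⊤ : ℕ∞))) +
      (Finset.univ.val.map fun j : Fin q => ((m j : ℕ), ((m j + n j : ℕ) : ℕ∞))) =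
    (Finset.univ.val.map fun i : Fin p' => ((r' i : ℕ), (⊤ : ℕ∞))) +
      (Finset.univ.val.map fun j : Fin q' => ((m' j : ℕ), ((m' j + n' j : ℕ) : ℕ∞))) := by
  set e₁ : Fin p ⊕ Fin q → ℕ × ℕ∞ :=
    Sum.elim (fun i => ((r i : ℕ), (⊤ : ℕ∞)))
      (fun j => ((m j : ℕ), ((m j + n j : ℕ) : ℕ∞))) with he₁
  set e₂ : Fin p' ⊕ Fin q' → ℕ × ℕ∞ :=
    Sum.elim (fun i => ((r' i : ℕ), (⊤ : ℕ∞)))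
      (fun j => ((m' j : ℕ), ((m' j + n' j : ℕ) : ℕ∞))) with he₂
  have hV1 : (Sum.elim
        (fun i : Fin p => intervalModule κ (r i) ⊤)
        (fun j : Fin q => intervalModule κ (m j) ((m j + n j : ℕ) : ℕ∞)))
      = fun k => intervalModule κ (e₁ k).1 (e₁ k).2 := by
    funext k; cases k <;> rfl
  have hV2 : (Sum.elim
        (fun i : Fin p' => intervalModule κ (r' i) ⊤)
        (fun j : Fin q' => intervalModule κ (m' j) ((m' j + n' j : ℕ) : ℕ∞)))
      = fun k => intervalModule κ (e₂ k).1 (e₂ k).2 := by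
    funext k; cases k <;> rfl
  rw [hV1, hV2] at hiso
  have hM : Finset.univ.val.map e₁
      = (Finset.univ.val.map fun i : Fin p => ((r i : ℕ), (⊤ : ℕ∞))) +
        (Finset.univ.val.map fun j : Fin q => ((m j : ℕ), ((m j + n j : ℕ) : ℕ∞))) := by
    rw [← Finset.univ_disjSum_univ, Finset.val_disjSum]
    show Multiset.map e₁
      (Multiset.map Sum.inl Finset.univ.val + Multiset.map Sum.inr Finset.univ.val) = _
    rw [Multiset.map_add, Multiset.map_map, Multiset.map_map]
    rfl
  have hM' : Finset.univ.val.map e₂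
      = (Finset.univ.val.map fun i : Fin p' => ((r' i : ℕ), (⊤ : ℕ∞))) +
        (Finset.univ.val.map fun j : Fin q' => ((m' j : ℕ), ((m' j + n' j : ℕ) : ℕ∞))) := by
    rw [← Finset.univ_disjSum_univ, Finset.val_disjSum]
    show Multiset.map e₂
      (Multiset.map Sum.inl Finset.univ.val + Multiset.map Sum.inr Finset.univ.val) = _
    rw [Multiset.map_add, Multiset.map_map, Multiset.map_map]
    rfl
  rw [← hM, ← hM']
  apply multiset_eq_of_counts
  · rintro s hs
    obtain ⟨k, _, rfl⟩ := Multiset.mem_map.mp hs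
    cases k with
    | inl i => exact le_top
    | inr j => exact Nat.cast_le.mpr (Nat.le_add_right _ _)
  · rintro s hs
    obtain ⟨k, _, rfl⟩ := Multiset.mem_map.mp hs
    cases k with
    | inl i => exact le_top
    | inr j => exact Nat.cast_le.mpr (Nat.le_add_right _ _)
  · intro i j hij
    rw [card_filter_eq_pvsRank (κ := κ) e₁ i j hij, card_filter_eq_pvsRank (κ := κ) e₂ i j hij]
    exact pvsRank_eq_of_iso hiso i j hij
end

section
/- Let κ be a field and let V be a tame persistence vector space over κ with bar code given by a decomposition V ≅ ⊕_{k∈K} I[a_k, b_k]. Define μ(i,j) = #{k ∈ K : (a_k, b_k) = (i,j)} for i ∈ ℕ, j ∈ ℕ ∪ {∞}, and β(i,j) = dim(range φ_{i,j}) for i ≤ j in ℕ, with β(i,∞) defined as β(i,m) for any m ≥ i beyond which all structure maps are isomorphisms. Then: (1) μ(i,j) = β(i,j) − β(i−1,j) − β(i,j+1) + β(i−1,j+1) for 0 < i ≤ j < ∞; μ(0,j) = β(0,j) − β(0,j+1) for 0 ≤ j < ∞; μ(i,∞) = β(i,∞) − β(i−1,∞) for 0 < i < ∞; μ(0,∞)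 = β(0,∞); and (2) β(i,j) = Σ_{l ≤ i, m ≥ j} μ(l,m) for all i ≤ j. -/
open scoped Classical

namespace Stmt14Aux

open Module LinearMap Finset

variable {κ : Type} [Field κ]

theorem phiLE_self (V : PersistenceVS κ) (i : ℕ) : V.phiLE (le_refl i) = LinearMap.id :=
  Nat.leRecOn_self _

theorem phiLE_succ (V : PersistenceVS κ) {i j : ℕ} (h : i ≤ j) {h' : i ≤ j + 1} :
    V.phiLE h' = (V.φ j).comp (V.phiLE h) :=
  Nat.leRecOn_succ h _

theorem comm_phiLE {U W : PersistenceVS κ} (f : PersistenceHom U W) {i j : ℕ} (h : i ≤ j) :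
    (W.phiLE h).comp (f.ω i) = (f.ω j).comp (U.phiLE h) := by
  induction j, h using Nat.le_induction with
  | base => rw [phiLE_self, phiLE_self]; ext x; rfl
  | succ j h ih =>
    rw [phiLE_succ U h, phiLE_succ W h, LinearMap.comp_assoc, ih, ← LinearMap.comp_assoc,
      f.comm j, LinearMap.comp_assoc]

theorem finrank_range_iso {U W : PersistenceVS κ} (f : PersistenceHom U W)
    (hf : ∀ n, Function.Bijective (f.ω n)) {i j : ℕ} (h : i ≤ j) :
    finrank κ (LinearMap.range (U.phiLE h)) = finrank κ (LinearMap.range (W.phiLE h)) := by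
  have h1 : LinearMap.range (W.phiLE h) = Submodule.map (f.ω j) (LinearMap.range (U.phiLE h)) := by
    rw [← LinearMap.range_comp, ← comm_phiLE f h, LinearMap.range_comp,
      LinearMap.range_eq_top.2 (hf i).2, Submodule.map_top]
  rw [h1]
  exact (Submodule.equivMapOfInjective _ (hf j).1 _).finrank_eq

end Stmt14Aux
namespace Stmt14Aux

theorem directSum_phiLE {κ : Type} [Field κ] {ι : Type} [Fintype ι]
    (Vs : ι → PersistenceVS κ) {i j : ℕ} (h : i ≤ j) :
    (directSumPVS Vs).phiLE h
      = LinearMap.pi fun k => ((Vs k).phiLE h).comp (LinearMap.proj k) := by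
  induction j, h using Nat.le_induction with
  | base =>
    refine LinearMap.ext fun x => funext fun k => ?_
    have h1 : (directSumPVS Vs).phiLE (le_refl i) x = x :=
      LinearMap.congr_fun (phiLE_self (directSumPVS Vs) i) x
    have h2 : ((Vs k).phiLE (le_refl i)) (x k) = x k :=
      LinearMap.congr_fun (phiLE_self (Vs k) i) (x k)
    exact (congrFun h1 k).trans h2.symm
  | succ j h ih =>
    refine LinearMap.ext fun x => funext fun k => ?_
    calc ((directSumPVS Vs).phiLE (Nat.le_succ_of_le h)) x k
        = (Vs k).φ j (((directSumPVS Vs).phiLE h) x k) := by rw [phiLE_succ _ h]; rfl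
      _ = (Vs k).φ j (((Vs k).phiLE h) (x k)) := by rw [ih]; exact rfl
      _ = ((Vs k).phiLE (Nat.le_succ_of_le h)) (x k) := by rw [phiLE_succ (Vs k) h]; rfl
      _ = (LinearMap.pi fun k => ((Vs k).phiLE (Nat.le_succ_of_le h)).comp
            (LinearMap.proj k)) x k := rfl

theorem finrank_pi_submodule {κ : Type} [Field κ] {ι : Type} [Fintype ι] {B : ι → Type}
    [∀ k, AddCommGroup (B k)] [∀ k, Module κ (B k)] [∀ k, FiniteDimensional κ (B k)]
    (p : ∀ k, Submodule κ (B k)) :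
    Module.finrank κ (Submodule.pi Set.univ p) = ∑ k, Module.finrank κ (p k) := by
  have e : (Submodule.pi Set.univ p) ≃ₗ[κ] ∀ k, p k :=
    { toFun := fun x k => ⟨x.1 k, x.2 k (Set.mem_univ k)⟩
      invFun := fun y => ⟨fun k => (y k).1, fun k _ => (y k).2⟩
      map_add' := fun _ _ => rfl
      map_smul' := fun _ _ => rfl
      left_inv := fun _ => rfl
      right_inv := fun _ => rfl }
  rw [e.finrank_eq, Module.finrank_pi_fintype]

theorem finrank_range_pi {κ : Type} [Field κ] {ι : Type} [Fintype ι] {A B : ι → Type}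
    [∀ k, AddCommGroup (A k)] [∀ k, Module κ (A k)]
    [∀ k, AddCommGroup (B k)] [∀ k, Module κ (B k)] [∀ k, FiniteDimensional κ (B k)]
    (f : ∀ k, A k →ₗ[κ] B k) :
    Module.finrank κ (LinearMap.range (LinearMap.pi fun k => (f k).comp (LinearMap.proj k)))
      = ∑ k, Module.finrank κ (LinearMap.range (f k)) := by
  have hrange : LinearMap.range (LinearMap.pi fun k => (f k).comp (LinearMap.proj k))
      = Submodule.pi Set.univ (fun k => LinearMap.range (f k)) := by
    ext y
    simp only [LinearMap.mem_range, Submodule.mem_pi, Set.mem_univ, forall_true_left]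
    constructor
    · rintro ⟨x, rfl⟩ k
      exact ⟨x k, by simp [LinearMap.pi_apply]⟩
    · intro hy
      choose x hx using hy
      exact ⟨x, by funext k; simp [LinearMap.pi_apply, hx]⟩
  rw [hrange, finrank_pi_submodule]

end Stmt14Aux
namespace Stmt14Aux

open Module

theorem intervalSub_eq_top {κ : Type} [Field κ] {a : ℕ} {b : ℕ∞} {n : ℕ}
    (h1 : a ≤ n) (h2 : (n : ℕ∞) ≤ b) : intervalSub κ a b n = ⊤ := if_pos ⟨h1, h2⟩

theorem intervalSub_eq_bot {κ : Type} [Field κ] {a : ℕ} {b : ℕ∞} {n : ℕ}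
    (h : ¬(a ≤ n ∧ (n : ℕ∞) ≤ b)) : intervalSub κ a b n = ⊥ := if_neg h

theorem interval_surjective {κ : Type} [Field κ] {a : ℕ} {b : ℕ∞} {i j : ℕ} (h : i ≤ j)
    (ha : a ≤ i) (hb : (j : ℕ∞) ≤ b) :
    Function.Surjective ((intervalModule κ a b).phiLE h) := by
  induction j, h using Nat.le_induction with
  | base => rw [phiLE_self]; exact Function.surjective_id
  | succ j h ih =>
    have hjb : (j : ℕ∞) ≤ b := le_trans (by exact_mod_cast Nat.le_succ j) hb
    rw [phiLE_succ _ h]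
    have hstop : intervalSub κ a b (j + 1) = ⊤ :=
      intervalSub_eq_top (le_trans ha (le_trans h (Nat.le_succ j))) hb
    have hstop' : intervalSub κ a b j = ⊤ := intervalSub_eq_top (le_trans ha h) hjb
    have hle : intervalSub κ a b j ≤ intervalSub κ a b (j + 1) := by
      rw [hstop]; exact le_top
    have hphi : (intervalModule κ a b).φ j = Submodule.inclusion hle := dif_pos hle
    have hsurj : Function.Surjective ((intervalModule κ a b).φ j) := by
      rw [hphi]
      rintro ⟨y, hy⟩
      exact ⟨⟨y, by rw [hstop']; trivial⟩, rfl⟩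
    exact hsurj.comp (ih hjb)

theorem interval_finrank {κ : Type} [Field κ] (a : ℕ) (b : ℕ∞) {i j : ℕ} (h : i ≤ j) :
    finrank κ (LinearMap.range ((intervalModule κ a b).phiLE h))
      = if a ≤ i ∧ (j : ℕ∞) ≤ b then 1 else 0 := by
  by_cases hc : a ≤ i ∧ (j : ℕ∞) ≤ b
  · rw [if_pos hc, LinearMap.range_eq_top.2 (interval_surjective h hc.1 hc.2), finrank_top]
    show finrank κ ↥(intervalSub κ a b j) = 1
    rw [intervalSub_eq_top (hc.1.trans h) hc.2, finrank_top, finrank_self]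
  · rw [if_neg hc]
    by_cases hai : a ≤ i
    · have hbot : intervalSub κ a b j = ⊥ :=
        intervalSub_eq_bot fun hcj => hc ⟨hai, hcj.2⟩
      haveI : Subsingleton ((intervalModule κ a b).V j) := by
        show Subsingleton ↥(intervalSub κ a b j)
        rw [hbot]; infer_instance
      exact Module.finrank_zero_of_subsingleton
    · have hbot : intervalSub κ a b i = ⊥ := intervalSub_eq_bot fun hci => hai hci.1
      haveI : Subsingleton ((intervalModule κ a b).V i) := by
        show Subsingleton ↥(intervalSub κ a b i)
        rw [hbot]; infer_instance
      have hz : (intervalModule κ a b).phiLE h = 0 :=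
        LinearMap.ext fun x => by rw [Subsingleton.elim x 0, map_zero]; rfl
      rw [hz, LinearMap.range_zero, finrank_bot]

end Stmt14Aux
namespace Stmt14Aux

open Module Finset

theorem beta_finite {κ K : Type} [Field κ] [Fintype K] (a : K → ℕ) (b : K → ℕ∞)
    (V : PersistenceVS κ)
    (hV : V.Isomorphic (directSumPVS fun k : K => intervalModule κ (a k) (b k)))
    {i j : ℕ} (h : i ≤ j) :
    finrank κ (LinearMap.range (V.phiLE h))
      = (univ.filter fun k => a k ≤ i ∧ (j : ℕ∞) ≤ b k).card := by
  obtain ⟨f, hf⟩ := hV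
  haveI : ∀ k : K, FiniteDimensional κ ((intervalModule κ (a k) (b k)).V j) := fun k => by
    show FiniteDimensional κ ↥(intervalSub κ (a k) (b k) j)
    infer_instance
  rw [finrank_range_iso f hf h, directSum_phiLE]
  refine Eq.trans (finrank_range_pi fun k => (intervalModule κ (a k) (b k)).phiLE h) ?_
  rw [Finset.card_filter]
  exact Finset.sum_congr rfl fun k _ => by rw [interval_finrank (a k) (b k) h]

end Stmt14Aux
namespace Stmt14Aux

open Finset

theorem filter_congr' {K : Type} [Fintype K] {p q : K → Prop} [DecidablePred p]
    [DecidablePred q] (h : ∀ k, p k ↔ q k) :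
    univ.filter p = univ.filter q := by
  ext k; simp [h k]

theorem card_split {K : Type} [Fintype K] (p q : K → Prop) [DecidablePred p]
    [DecidablePred q] [DecidablePred fun k => q k ∧ ¬ p k] (hpq : ∀ k, p k → q k) :
    (univ.filter q).card
      = (univ.filter p).card + (univ.filter fun k => q k ∧ ¬ p k).card := by
  rw [← Finset.card_union_of_disjoint]
  · congr 1
    ext k
    simp only [mem_filter, mem_union, mem_univ, true_and]
    constructor
    · intro hq
      by_cases hp : p k
      · exact Or.inl hp
      · exact Or.inr ⟨hq, hp⟩
    · rintro (hp | ⟨hq, _⟩)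
      exacts [hpq k hp, hq]
  · rw [Finset.disjoint_left]
    intro k hk hk'
    simp only [mem_filter, mem_univ, true_and] at hk hk'
    exact hk'.2 hk

theorem card_fiber_sum {K : Type} [Fintype K] {α : Type} [DecidableEq α] (s : Finset α)
    (g : K → α) (P : K → Prop) [DecidablePred P]
    [∀ x, DecidablePred fun k => P k ∧ g k = x] (hs : ∀ k, P k → g k ∈ s) :
    (univ.filter P).card = ∑ x ∈ s, (univ.filter fun k => P k ∧ g k = x).card := by
  rw [Finset.card_eq_sum_card_fiberwise (f := g) (t := s)
    (fun k hk => hs k (by simpa using (Finset.mem_filter.mp hk).2))]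
  refine Finset.sum_congr rfl fun x _ => ?_
  congr 1
  ext k
  simp only [mem_filter, mem_univ, true_and, and_comm]

theorem enat_between {b : ℕ∞} {j : ℕ} :
    ((j : ℕ∞) ≤ b ∧ ¬((j + 1 : ℕ) : ℕ∞) ≤ b) ↔ b = (j : ℕ∞) := by
  cases b with
  | top => simp
  | coe n =>
    simp only [Nat.cast_le, Nat.cast_inj]
    constructor
    · rintro ⟨h1, h2⟩; omega
    · rintro rfl; omega

theorem enat_cast_le {m n : ℕ} : ((m : ℕ∞) ≤ (n : ℕ∞)) ↔ m ≤ n := Nat.cast_le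

end Stmt14Aux

open Finset

/-- Relations between the multiplicities `μ(i,j)` of the bar code of a
tame persistence vector space and the persistent Betti numbers `β(i,j)`:
(1) the inclusion–exclusion formulas expressing `μ` in terms of `β` (in the four cases
`0 < i ≤ j < ∞`; `i = 0 ≤ j < ∞`; `0 < i, j = ∞`; `i = 0, j = ∞`), and
(2) `β(i,j) = Σ_{l ≤ i, m ≥ j} μ(l,m)` for all `i ≤ j` (the sum over finite `m`
being truncated at a bound `M` beyond all finite right endpoints). -/
theorem stmt14 {κ K : Type} [Field κ] [Fintype K]
    (a : K → ℕ) (b : K → ℕ∞) (hab : ∀ k, (a k : ℕ∞) ≤ b k)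
    (V : PersistenceVS κ)
    (hV : V.Isomorphic (directSumPVS fun k : K => intervalModule κ (a k) (b k)))
    (N : ℕ) (hN : ∀ n, N ≤ n → Function.Bijective (V.φ n))
    (μ : ℕ → ℕ∞ → ℕ)
    (hμ : ∀ (i : ℕ) (j : ℕ∞), μ i j = Nat.card {k : K // a k = i ∧ b k = j})
    (β : ℕ → ℕ∞ → ℕ)
    (hβ : ∀ (i j : ℕ) (h : i ≤ j),
      β i (j : ℕ∞) = Module.finrank κ (LinearMap.range (V.phiLE h)))
    (hβtop : ∀ (i m : ℕ) (h : i ≤ m), N ≤ m →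
      β i ⊤ = Module.finrank κ (LinearMap.range (V.phiLE h)))
    (M : ℕ) (hM : ∀ k, b k = ⊤ ∨ b k ≤ (M : ℕ∞)) :
    ((∀ i j : ℕ, 0 < i → i ≤ j →
        (μ i (j : ℕ∞) : ℤ) =
          (β i (j : ℕ∞) : ℤ) - β (i - 1) (j : ℕ∞) - β i ((j + 1 : ℕ) : ℕ∞) +
            β (i - 1) ((j + 1 : ℕ) : ℕ∞)) ∧
      (∀ j : ℕ,
        (μ 0 (j : ℕ∞) : ℤ) = (β 0 (j : ℕ∞) : ℤ) - β 0 ((j + 1 : ℕ) : ℕ∞)) ∧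
      (∀ i : ℕ, 0 < i → (μ i ⊤ : ℤ) = (β i ⊤ : ℤ) - β (i - 1) ⊤) ∧
      μ 0 ⊤ = β 0 ⊤) ∧
    ∀ (i : ℕ) (j : ℕ∞), (i : ℕ∞) ≤ j →
      β i j =
        (∑ l ∈ Finset.range (i + 1), ∑ m ∈ Finset.range (M + 1),
            if j ≤ (m : ℕ∞) then μ l (m : ℕ∞) else 0) +
          ∑ l ∈ Finset.range (i + 1), μ l ⊤ := by
  have hμc : ∀ (i : ℕ) (j : ℕ∞),
      μ i j = (univ.filter fun k => a k = i ∧ b k = j).card := by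
    intro i j
    rw [hμ, Nat.card_eq_fintype_card, Fintype.card_subtype]
  have hβfin : ∀ (i j : ℕ), i ≤ j →
      β i (j : ℕ∞) = (univ.filter fun k => a k ≤ i ∧ (j : ℕ∞) ≤ b k).card := by
    intro i j hij
    rw [hβ i j hij, Stmt14Aux.beta_finite a b V hV hij]
  have hβtopc : ∀ i : ℕ,
      β i ⊤ = (univ.filter fun k => a k ≤ i ∧ b k = ⊤).card := by
    intro i
    have him : i ≤ max (max i N) (M + 1) := le_trans (le_max_left i N) (le_max_left _ _)
    have hNm : N ≤ max (max i N) (M + 1) := le_trans (le_max_right i N) (le_max_left _ _)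
    have hMm : M + 1 ≤ max (max i N) (M + 1) := le_max_right _ _
    rw [hβtop i _ him hNm, Stmt14Aux.beta_finite a b V hV him]
    refine congrArg Finset.card (Stmt14Aux.filter_congr' fun k => ?_)
    constructor
    · rintro ⟨h1, h2⟩
      refine ⟨h1, ?_⟩
      rcases hM k with h | h
      · exact h
      · exfalso
        have hc := le_trans h2 h
        rw [Stmt14Aux.enat_cast_le] at hc
        omega
    · rintro ⟨h1, h2⟩
      exact ⟨h1, h2 ▸ le_top⟩
  have hβc : ∀ (i : ℕ) (j : ℕ∞), (i : ℕ∞) ≤ j →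
      β i j = (univ.filter fun k => a k ≤ i ∧ j ≤ b k).card := by
    intro i j hij
    cases j with
    | top =>
      rw [hβtopc i]
      refine congrArg Finset.card (Stmt14Aux.filter_congr' fun k => ?_)
      simp [top_le_iff]
    | coe j => exact hβfin i j (by exact_mod_cast hij)
  -- basic card decompositions
  have ecoe : ∀ j : ℕ, ((j : ℕ∞) ≤ ((j + 1 : ℕ) : ℕ∞)) := fun j => by
    exact_mod_cast Nat.le_succ j
  have e1 : ∀ (i j : ℕ), 0 < i →
      (univ.filter fun k => a k ≤ i ∧ (j : ℕ∞) ≤ b k).card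
        = (univ.filter fun k => a k ≤ i - 1 ∧ (j : ℕ∞) ≤ b k).card
          + (univ.filter fun k => a k = i ∧ (j : ℕ∞) ≤ b k).card := by
    intro i j hi
    rw [Stmt14Aux.card_split (fun k => a k ≤ i - 1 ∧ (j : ℕ∞) ≤ b k) _
      (fun k hk => ⟨by omega, hk.2⟩)]
    congr 1
    refine congrArg Finset.card (Stmt14Aux.filter_congr' fun k => ?_)
    constructor
    · rintro ⟨⟨h1, h2⟩, h3⟩
      refine ⟨?_, h2⟩
      by_contra hne
      exact h3 ⟨by omega, h2⟩
    · rintro ⟨h1, h2⟩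
      exact ⟨⟨by omega, h2⟩, fun hk => by omega⟩
  have e1top : ∀ (i : ℕ), 0 < i →
      (univ.filter fun k => a k ≤ i ∧ b k = ⊤).card
        = (univ.filter fun k => a k ≤ i - 1 ∧ b k = ⊤).card
          + (univ.filter fun k => a k = i ∧ b k = ⊤).card := by
    intro i hi
    rw [Stmt14Aux.card_split (fun k => a k ≤ i - 1 ∧ b k = ⊤) _
      (fun k hk => ⟨by omega, hk.2⟩)]
    congr 1
    refine congrArg Finset.card (Stmt14Aux.filter_congr' fun k => ?_)
    constructor
    · rintro ⟨⟨h1, h2⟩, h3⟩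
      refine ⟨?_, h2⟩
      by_contra hne
      exact h3 ⟨by omega, h2⟩
    · rintro ⟨h1, h2⟩
      exact ⟨⟨by omega, h2⟩, fun hk => by omega⟩
  have e3 : ∀ (i j : ℕ),
      (univ.filter fun k => a k = i ∧ (j : ℕ∞) ≤ b k).card
        = (univ.filter fun k => a k = i ∧ ((j + 1 : ℕ) : ℕ∞) ≤ b k).card
          + (univ.filter fun k => a k = i ∧ b k = (j : ℕ∞)).card := by
    intro i j
    rw [Stmt14Aux.card_split (fun k => a k = i ∧ ((j + 1 : ℕ) : ℕ∞) ≤ b k) _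
      (fun k hk => ⟨hk.1, le_trans (ecoe j) hk.2⟩)]
    congr 1
    refine congrArg Finset.card (Stmt14Aux.filter_congr' fun k => ?_)
    constructor
    · rintro ⟨⟨h1, h2⟩, h3⟩
      refine ⟨h1, Stmt14Aux.enat_between.mp ⟨h2, fun hc => h3 ⟨h1, hc⟩⟩⟩
    · rintro ⟨h1, h2⟩
      obtain ⟨h3, h4⟩ := Stmt14Aux.enat_between.mpr h2
      exact ⟨⟨h1, h3⟩, fun hk => h4 hk.2⟩
  have ezero : ∀ (P : K → Prop) [DecidablePred P],
      (univ.filter fun k => a k ≤ 0 ∧ P k).card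
        = (univ.filter fun k => a k = 0 ∧ P k).card := by
    intro P _
    refine congrArg Finset.card (Stmt14Aux.filter_congr' fun k => ?_)
    constructor
    · rintro ⟨h1, h2⟩; exact ⟨by omega, h2⟩
    · rintro ⟨h1, h2⟩; exact ⟨by omega, h2⟩
  constructor
  · refine ⟨?_, ?_, ?_, ?_⟩
    · intro i j hi hij
      rw [hβfin i j hij, hβfin (i - 1) j (by omega), hβfin i (j + 1) (by omega),
        hβfin (i - 1) (j + 1) (by omega), hμc]
      have h1 := e1 i j hi
      have h2 := e1 i (j + 1) hi
      have h3 := e3 i j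
      omega
    · intro j
      rw [hβfin 0 j (by omega), hβfin 0 (j + 1) (by omega), hμc,
        ezero (fun k => (j : ℕ∞) ≤ b k), ezero (fun k => ((j + 1 : ℕ) : ℕ∞) ≤ b k)]
      have h3 := e3 0 j
      omega
    · intro i hi
      rw [hβtopc i, hβtopc (i - 1), hμc]
      have h1 := e1top i hi
      omega
    · rw [hβtopc 0, hμc, ezero (fun k => b k = ⊤)]
  · intro i j hij
    rw [hβc i j hij]
    have step1 : (univ.filter fun k => a k ≤ i ∧ j ≤ b k).card
        = ∑ l ∈ Finset.range (i + 1), (univ.filter fun k => a k = l ∧ j ≤ b k).card := by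
      rw [Stmt14Aux.card_fiber_sum (Finset.range (i + 1)) a _
        (fun k hk => Finset.mem_range.mpr (Nat.lt_succ_of_le hk.1))]
      refine Finset.sum_congr rfl fun l hl => ?_
      have hl' : l ≤ i := Nat.lt_succ_iff.mp (Finset.mem_range.mp hl)
      refine congrArg Finset.card (Stmt14Aux.filter_congr' fun k => ?_)
      constructor
      · rintro ⟨⟨_, h2⟩, h3⟩; exact ⟨h3, h2⟩
      · rintro ⟨h1, h2⟩; exact ⟨⟨by omega, h2⟩, h1⟩
    have step2 : ∀ l : ℕ, (univ.filter fun k => a k = l ∧ j ≤ b k).card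
        = (∑ m ∈ Finset.range (M + 1), if j ≤ (m : ℕ∞) then μ l (m : ℕ∞) else 0)
          + μ l ⊤ := by
      intro l
      rw [Stmt14Aux.card_split (fun k => a k = l ∧ b k = ⊤) (fun k => a k = l ∧ j ≤ b k)
        (fun k hk => ⟨hk.1, hk.2 ▸ le_top⟩), add_comm]
      congr 1
      · rw [show (univ.filter fun k => (a k = l ∧ j ≤ b k) ∧ ¬(a k = l ∧ b k = ⊤))
            = univ.filter fun k => (a k = l ∧ j ≤ b k) ∧ b k ≠ ⊤ from
          Stmt14Aux.filter_congr' fun k => by tauto]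
        have hmem : ∀ k, ((a k = l ∧ j ≤ b k) ∧ b k ≠ ⊤) →
            b k ∈ (Finset.range (M + 1)).image (Nat.cast : ℕ → ℕ∞) := by
          rintro k ⟨⟨h1, h2⟩, h3⟩
          rcases hM k with h | h
          · exact absurd h h3
          · cases hbk : b k with
            | top => exact absurd hbk h3
            | coe m =>
              refine Finset.mem_image.mpr ⟨m, Finset.mem_range.mpr ?_, rfl⟩
              rw [hbk, Stmt14Aux.enat_cast_le] at h
              omega
        rw [Stmt14Aux.card_fiber_sum _ b _ hmem,
          Finset.sum_image (fun x _ y _ hxy => by exact_mod_cast hxy)]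
        refine Finset.sum_congr rfl fun m hm => ?_
        by_cases hjm : j ≤ (m : ℕ∞)
        · rw [if_pos hjm, hμc]
          refine congrArg Finset.card (Stmt14Aux.filter_congr' fun k => ?_)
          constructor
          · rintro ⟨⟨⟨hk1, hk2⟩, hk3⟩, hk4⟩; exact ⟨hk1, hk4⟩
          · rintro ⟨hk1, hk4⟩
            exact ⟨⟨⟨hk1, le_trans hjm hk4.ge⟩, by simp [hk4]⟩, hk4⟩
        · rw [if_neg hjm]
          rw [Finset.card_eq_zero, Finset.filter_eq_empty_iff]
          rintro k - ⟨⟨⟨hk1, hk2⟩, hk3⟩, hk4⟩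
          exact hjm (hk4 ▸ hk2)
      · rw [hμc]
    rw [step1, Finset.sum_congr rfl fun l _ => step2 l, Finset.sum_add_distrib]
end

section
/- Let κ be a field and R = κ[X] the polynomial ring. Let M be an R-module equipped with a grading by κ-subspaces M = ⊕_{n∈ℕ} M_n such that X • M_n ⊆ M_{n+1} for all n. If M is finitely generated as an R-module, then every M_n is a finite-dimensional κ-vector space and there exists N ∈ ℕ such that for all n ≥ N the map M_n → M_{n+1}, m ↦ X • m, is bijective (i.e., the associated persistence vector space {M_n, X•} is tame). -/
open DirectSum Polynomial Submodule Module

namespace Stmt15Aux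

variable {κ M : Type*} [Field κ] [AddCommGroup M]
    [Module κ M] [Module (Polynomial κ) M] [IsScalarTower κ (Polynomial κ) M]
    (Mn : ℕ → Submodule κ M)
    (h : DirectSum.IsInternal Mn)
    (hX : ∀ n, ∀ m ∈ Mn n, (Polynomial.X : Polynomial κ) • m ∈ Mn (n + 1))

/-- The decomposition equivalence. -/
noncomputable def e : M ≃ₗ[κ] ⨁ n, Mn n :=
  (LinearEquiv.ofBijective (DirectSum.coeLinearMap Mn) h).symm

/-- Projection onto the `n`-th graded piece, as a map `M → M`. -/
noncomputable def π (n : ℕ) : M →ₗ[κ] M :=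
  (Mn n).subtype ∘ₗ (DFinsupp.lapply n) ∘ₗ (e Mn h).toLinearMap

include h hX

lemma π_apply (n : ℕ) (m : M) : π Mn h n m = ((e Mn h m) n : M) := rfl

lemma π_mem (n : ℕ) (m : M) : π Mn h n m ∈ Mn n := ((e Mn h m) n).2

lemma π_of_mem {n : ℕ} {m : M} (hm : m ∈ Mn n) : π Mn h n m = m := by
  rw [π_apply Mn h hX]
  rw [show e Mn h m = (e Mn h m) from rfl]
  have := h.ofBijective_coeLinearMap_of_mem (i := n) hm
  rw [show (e Mn h m) n = ((LinearEquiv.ofBijective (DirectSum.coeLinearMap Mn) h).symm m) n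
    from rfl, this]

lemma π_of_mem_ne {n d : ℕ} (hdn : d ≠ n) {m : M} (hm : m ∈ Mn d) : π Mn h n m = 0 := by
  rw [π_apply Mn h hX]
  have := h.ofBijective_coeLinearMap_of_mem_ne (i := d) (j := n) hdn hm
  rw [show (e Mn h m) n = ((LinearEquiv.ofBijective (DirectSum.coeLinearMap Mn) h).symm m) n
    from rfl, this]
  rfl

lemma π_X_smul (n : ℕ) (m : M) :
    π Mn h (n + 1) ((X : Polynomial κ) • m) = (X : Polynomial κ) • π Mn h n m := by
  have hm : m ∈ ⨆ i, Mn i := by rw [h.submodule_iSup_eq_top]; trivial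
  refine Submodule.iSup_induction (motive := fun m =>
      π Mn h (n + 1) ((X : Polynomial κ) • m) = (X : Polynomial κ) • π Mn h n m)
      Mn hm ?_ ?_ ?_
  · intro d x hx
    by_cases hdn : d = n
    · subst hdn
      rw [π_of_mem Mn h hX (hX d x hx), π_of_mem Mn h hX hx]
    · rw [π_of_mem_ne Mn h hX (show d + 1 ≠ n + 1 by omega) (hX d x hx),
        π_of_mem_ne Mn h hX hdn hx, smul_zero]
  · simp
  · intro x y hx hy
    rw [smul_add, map_add, map_add, hx, hy, smul_add]

lemma π_zero_X_smul (m : M) : π Mn h 0 ((X : Polynomial κ) • m) = 0 := by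
  have hm : m ∈ ⨆ i, Mn i := by rw [h.submodule_iSup_eq_top]; trivial
  refine Submodule.iSup_induction (motive := fun m =>
      π Mn h 0 ((X : Polynomial κ) • m) = 0) Mn hm ?_ ?_ ?_
  · intro d x hx
    exact π_of_mem_ne Mn h hX (show d + 1 ≠ 0 by omega) (hX d x hx)
  · simp
  · intro x y hx hy
    rw [smul_add, map_add, hx, hy, add_zero]

lemma π_Xpow_smul (k n : ℕ) (m : M) :
    π Mn h (n + k) ((X : Polynomial κ) ^ k • m) = (X : Polynomial κ) ^ k • π Mn h n m := by
  induction k with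
  | zero => simp
  | succ k ih =>
    have : (X : Polynomial κ) ^ (k + 1) • m = (X : Polynomial κ) • ((X : Polynomial κ) ^ k • m) := by
      rw [← mul_smul, ← pow_succ']
    rw [this, show n + (k + 1) = (n + k) + 1 from rfl, π_X_smul Mn h hX, ih,
      ← mul_smul, ← pow_succ']

lemma π_Xpow_smul_lt {k n : ℕ} (hkn : n < k) (m : M) :
    π Mn h n ((X : Polynomial κ) ^ k • m) = 0 := by
  induction k generalizing n m with
  | zero => omega
  | succ k ih =>
    have hXk : (X : Polynomial κ) ^ (k + 1) • m = (X : Polynomial κ) • ((X : Polynomial κ) ^ k • m) := by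
      rw [← mul_smul, ← pow_succ']
    rcases n with _ | n'
    · rw [hXk, π_zero_X_smul Mn h hX]
    · rw [hXk, π_X_smul Mn h hX, ih (by omega), smul_zero]

/-- A finite κ-spanning set for the degree-`n` piece. -/
noncomputable def gens (S : Finset M) (n : ℕ) : Set M :=
  Set.range (fun q : S × Fin (n + 1) =>
    (X : Polynomial κ) ^ (q.2 : ℕ) • π Mn h (n - (q.2 : ℕ)) (q.1 : M))

lemma π_poly_smul_mem_span (S : Finset M) (n : ℕ) (p : Polynomial κ) {g : M} (hg : g ∈ S) :
    π Mn h n (p • g) ∈ span κ (gens Mn h S n) := by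
  induction p using Polynomial.induction_on' with
  | add p q hp hq => rw [add_smul, map_add]; exact add_mem hp hq
  | monomial a c =>
    have : (monomial a c : Polynomial κ) • g = c • ((X : Polynomial κ) ^ a • g) := by
      rw [← C_mul_X_pow_eq_monomial, mul_smul,
        ← algebraMap_smul (Polynomial κ) c ((X : Polynomial κ) ^ a • g),
        Polynomial.algebraMap_eq]
    rw [this, map_smul]
    by_cases han : a ≤ n
    · have heq := π_Xpow_smul Mn h hX a (n - a) g
      rw [show n - a + a = n by omega] at heq
      rw [heq]
      exact smul_mem _ _ (subset_span ⟨(⟨g, hg⟩, ⟨a, by omega⟩), rfl⟩)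
    · rw [π_Xpow_smul_lt Mn h hX (show n < a by omega), smul_zero]
      exact zero_mem _

lemma mem_span_gens (S : Finset M) (hS : span (Polynomial κ) (S : Set M) = ⊤)
    {n : ℕ} {m : M} (hm : m ∈ Mn n) : m ∈ span κ (gens Mn h S n) := by
  have hmS : m ∈ span (Polynomial κ) (S : Set M) := by rw [hS]; trivial
  obtain ⟨f, -, hf⟩ := mem_span_finset.1 hmS
  have : m = π Mn h n m := (π_of_mem Mn h hX hm).symm
  rw [this, ← hf, map_sum]
  exact sum_mem fun g hg => π_poly_smul_mem_span Mn h hX S n (f g) hg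

lemma findim (S : Finset M) (hS : span (Polynomial κ) (S : Set M) = ⊤) (n : ℕ) :
    FiniteDimensional κ (Mn n) := by
  have : FiniteDimensional κ (span κ (gens Mn h S n)) :=
    FiniteDimensional.span_of_finite κ (Set.finite_range _)
  exact Submodule.finiteDimensional_of_le (fun m hm => mem_span_gens Mn h hX S hS hm)

lemma Xpow_smul_mem {d : ℕ} (k : ℕ) {m : M} (hm : m ∈ Mn d) :
    (X : Polynomial κ) ^ k • m ∈ Mn (d + k) := by
  induction k with
  | zero => simpa using hm
  | succ k ih =>
    have : (X : Polynomial κ) ^ (k + 1) • m = (X : Polynomial κ) • ((X : Polynomial κ) ^ k • m) := by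
      rw [← mul_smul, ← pow_succ']
    rw [this]
    exact hX _ _ ih

/-- The multiplication-by-X map as a κ-linear map. -/
noncomputable def f (n : ℕ) : Mn n →ₗ[κ] Mn (n + 1) where
  toFun m := ⟨(X : Polynomial κ) • (m : M), hX n m.1 m.2⟩
  map_add' x y := by simp [smul_add]
  map_smul' c x := by
    ext
    show (X : Polynomial κ) • (c • (x : M)) = c • ((X : Polynomial κ) • (x : M))
    rw [← algebraMap_smul (Polynomial κ) c (x : M), ← mul_smul, mul_comm, mul_smul,
      algebraMap_smul]

lemma f_surj (S : Finset M) (hS : span (Polynomial κ) (S : Set M) = ⊤) (D : ℕ)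
    (hD : ∀ g ∈ S, ∀ d, D < d → π Mn h d g = 0) {n : ℕ} (hn : D ≤ n) :
    Function.Surjective (f Mn hX n) := by
  rintro ⟨y, hy⟩
  set P : Submodule κ M := Submodule.map ((Mn (n + 1)).subtype ∘ₗ f Mn hX n) ⊤ with hP
  have hyP : y ∈ P := by
    have hsp : y ∈ span κ (gens Mn h S (n + 1)) := mem_span_gens Mn h hX S hS hy
    refine span_le.2 ?_ hsp
    rintro z ⟨⟨g, k⟩, rfl⟩
    simp only
    by_cases hz : π Mn h (n + 1 - (k : ℕ)) (g : M) = 0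
    · rw [hz, smul_zero]; exact zero_mem _
    · have hle : n + 1 - (k : ℕ) ≤ D := by
        by_contra hcon
        exact hz (hD g g.2 _ (by omega))
      have hk1 : 1 ≤ (k : ℕ) := by omega
      obtain ⟨j, hj⟩ : ∃ j, (k : ℕ) = j + 1 := ⟨(k : ℕ) - 1, by omega⟩
      have hkle : (k : ℕ) ≤ n + 1 := by omega
      have hw : (X : Polynomial κ) ^ j • π Mn h (n + 1 - (k : ℕ)) (g : M) ∈ Mn n := by
        have := Xpow_smul_mem Mn h hX j (π_mem Mn h hX (n + 1 - (k : ℕ)) (g : M))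
        rwa [show n + 1 - (k : ℕ) + j = n by omega] at this
      refine ⟨⟨_, hw⟩, trivial, ?_⟩
      show (X : Polynomial κ) • ((X : Polynomial κ) ^ j • π Mn h (n + 1 - (k : ℕ)) (g : M))
          = (X : Polynomial κ) ^ (k : ℕ) • π Mn h (n + 1 - (k : ℕ)) (g : M)
      rw [← mul_smul, ← pow_succ', ← hj]
  obtain ⟨w, -, hw⟩ := hyP
  exact ⟨w, Subtype.ext hw⟩

end Stmt15Aux

/-- If `M` is a `κ[X]`-module equipped with a grading by `κ`-subspaces
`M = ⊕ₙ Mₙ` with `X • Mₙ ⊆ Mₙ₊₁`, and `M` is finitely generated over `κ[X]`, then each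
`Mₙ` is finite dimensional over `κ` and multiplication by `X`, `Mₙ → Mₙ₊₁`, is bijective
for all sufficiently large `n` (i.e. the associated persistence vector space is tame). -/
theorem stmt15 {κ M : Type*} [Field κ] [AddCommGroup M]
    [Module κ M] [Module (Polynomial κ) M] [IsScalarTower κ (Polynomial κ) M]
    (Mn : ℕ → Submodule κ M)
    (hinternal : DirectSum.IsInternal Mn)
    (hX : ∀ n, ∀ m ∈ Mn n, (Polynomial.X : Polynomial κ) • m ∈ Mn (n + 1))
    (hfg : Module.Finite (Polynomial κ) M) :
    (∀ n, FiniteDimensional κ (Mn n)) ∧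
      ∃ N, ∀ n, N ≤ n →
        Function.Bijective (fun m : Mn n =>
          (⟨(Polynomial.X : Polynomial κ) • (m : M), hX n m.1 m.2⟩ : Mn (n + 1))) := by
  classical
  obtain ⟨S, hS⟩ := hfg.fg_top
  have hfd : ∀ n, FiniteDimensional κ (Mn n) := fun n =>
    Stmt15Aux.findim Mn hinternal hX S hS n
  refine ⟨hfd, ?_⟩
  haveI := hfd
  set D : ℕ := S.sup (fun g => (Stmt15Aux.e Mn hinternal g).support.sup id) with hDdef
  have hD : ∀ g ∈ S, ∀ d, D < d → Stmt15Aux.π Mn hinternal d g = 0 := by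
    intro g hg d hd
    rw [Stmt15Aux.π_apply Mn hinternal hX]
    suffices h0 : (Stmt15Aux.e Mn hinternal g) d = 0 by rw [h0]; rfl
    by_contra h0
    have hmem : d ∈ (Stmt15Aux.e Mn hinternal g).support := DFinsupp.mem_support_iff.2 h0
    have h1 : d ≤ (Stmt15Aux.e Mn hinternal g).support.sup id := Finset.le_sup (f := id) hmem
    have h2 : (Stmt15Aux.e Mn hinternal g).support.sup id ≤ D :=
      Finset.le_sup (f := fun g => (Stmt15Aux.e Mn hinternal g).support.sup id) hg
    omega
  set d : ℕ → ℕ := fun n => Module.finrank κ (Mn n) with hddef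
  have hstep : ∀ n, D ≤ n → Function.Surjective (Stmt15Aux.f Mn hX n) := fun n hn =>
    Stmt15Aux.f_surj Mn hinternal hX S hS D hD hn
  have hrank : ∀ n, D ≤ n →
      d (n + 1) + Module.finrank κ (LinearMap.ker (Stmt15Aux.f Mn hX n)) = d n := by
    intro n hn
    have := LinearMap.finrank_range_add_finrank_ker (Stmt15Aux.f Mn hX n)
    rwa [LinearMap.range_eq_top.2 (hstep n hn), finrank_top] at this
  have hle : ∀ n, D ≤ n → d (n + 1) ≤ d n := fun n hn => Nat.le.intro (hrank n hn)
  have hmono : ∀ a b, D ≤ a → a ≤ b → d b ≤ d a := by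
    intro a b ha hab
    induction b, hab using Nat.le_induction with
    | base => exact le_rfl
    | succ b hb ih => exact le_trans (hle b (by omega)) ih
  have hne : (Set.range fun j => d (D + j)).Nonempty := Set.range_nonempty _
  obtain ⟨j0, hj0⟩ := Nat.sInf_mem hne
  refine ⟨D + j0, fun n hn => ?_⟩
  have hDn : D ≤ n := le_trans (Nat.le_add_right _ _) hn
  have hsurj := hstep n hDn
  have heq : d (n + 1) = d n := by
    have h1 : d n ≤ d (D + j0) := hmono (D + j0) n (Nat.le_add_right D j0) hn
    have h2 : sInf (Set.range fun j => d (D + j)) ≤ d (n + 1) :=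
      Nat.sInf_le ⟨n + 1 - D,
        show d (D + (n + 1 - D)) = d (n + 1) by rw [show D + (n + 1 - D) = n + 1 by omega]⟩
    have hj0' : d (D + j0) = sInf (Set.range fun j => d (D + j)) := hj0
    exact le_antisymm (hle n hDn) (le_trans h1 (le_trans (le_of_eq hj0') h2))
  have hker : LinearMap.ker (Stmt15Aux.f Mn hX n) = ⊥ := by
    have hr := hrank n hDn
    rw [heq] at hr
    have h0 : Module.finrank κ (LinearMap.ker (Stmt15Aux.f Mn hX n)) = 0 := by omega
    exact Submodule.finrank_eq_zero.1 h0
  exact ⟨LinearMap.ker_eq_bot.1 hker, hsurj⟩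
end

section
/- Let C', C, C'' and D', D, D'' be finite-dimensional real inner product spaces with linear maps d_C : C' → C, e_C : C → C'' satisfying e_C ∘ d_C = 0 and d_D : D' → D, e_D : D → D'' satisfying e_D ∘ d_D = 0. Let f' : C' → D', f : C → D, f'' : C'' → D'' be linear maps with f ∘ d_C = d_D ∘ f' and f'' ∘ e_C = e_D ∘ f (a chain map). Let Δ_C = d_C ∘ d_C* + e_C* ∘ e_C and Δ_D = d_D ∘ d_D* + e_D* ∘ e_D be the Laplacians, and let P_C : C → C and P_D : D → D be the orthogonal projections onto ker Δ_C and ker Δ_D respectively. Then the rank of the induced map on homology, ker e_C / range d_C → ker e_D / range d_D, [x] ↦ [f x], equals the rank of the linear map P_D ∘ f ∘ P_C : C → D. -/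
open RealInnerProductSpace

section aux16
variable {E F G : Type*}
  [NormedAddCommGroup E] [InnerProductSpace ℝ E] [FiniteDimensional ℝ E]
  [NormedAddCommGroup F] [InnerProductSpace ℝ F] [FiniteDimensional ℝ F]
  [NormedAddCommGroup G] [InnerProductSpace ℝ G] [FiniteDimensional ℝ G]

lemma aux16_ker_adjoint (d : E →ₗ[ℝ] F) :
    LinearMap.ker (LinearMap.adjoint d) = (LinearMap.range d)ᗮ := by
  ext x
  constructor
  · intro hx
    intro u hu
    obtain ⟨z, rfl⟩ := hu
    rw [← LinearMap.adjoint_inner_right]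
    simp [LinearMap.mem_ker.mp hx]
  · intro hx
    have h0 : ⟪LinearMap.adjoint d x, LinearMap.adjoint d x⟫ = 0 := by
      rw [LinearMap.adjoint_inner_right]
      exact hx _ ⟨_, rfl⟩
    exact LinearMap.mem_ker.mpr (inner_self_eq_zero.mp h0)

lemma aux16_ker_lap (d : E →ₗ[ℝ] F) (e : F →ₗ[ℝ] G) :
    LinearMap.ker (d ∘ₗ LinearMap.adjoint d + LinearMap.adjoint e ∘ₗ e)
      = LinearMap.ker e ⊓ LinearMap.ker (LinearMap.adjoint d) := by
  ext x
  simp only [LinearMap.mem_ker, Submodule.mem_inf, LinearMap.add_apply, LinearMap.comp_apply]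
  constructor
  · intro h
    have h0 : ⟪x, d (LinearMap.adjoint d x) + LinearMap.adjoint e (e x)⟫ = 0 := by
      rw [h, inner_zero_right]
    rw [inner_add_right] at h0
    have h1 : ⟪x, d (LinearMap.adjoint d x)⟫ = ⟪LinearMap.adjoint d x, LinearMap.adjoint d x⟫ := by
      rw [real_inner_comm, ← LinearMap.adjoint_inner_right]
    have h2 : ⟪x, LinearMap.adjoint e (e x)⟫ = ⟪e x, e x⟫ := LinearMap.adjoint_inner_right e x (e x)
    rw [h1, h2] at h0
    have hp := add_eq_zero_iff_of_nonneg real_inner_self_nonneg real_inner_self_nonneg |>.mp h0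
    exact ⟨inner_self_eq_zero.mp hp.2, inner_self_eq_zero.mp hp.1⟩
  · rintro ⟨h1, h2⟩
    rw [h1, h2]
    simp

end aux16

set_option maxHeartbeats 2000000 in
/-- For a chain map `(f', f, f'')` between two-step complexes of
finite-dimensional real inner product spaces (`e_C ∘ d_C = 0`, `e_D ∘ d_D = 0`),
`f` maps `ker e_C` into `ker e_D` and `range d_C` into `range d_D`, and the rank of the
induced map on homology `ker e_C / range d_C → ker e_D / range d_D` equals the rank of
`P_D ∘ f ∘ P_C`, where `P_C`, `P_D` are the orthogonal projections onto the kernels of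
the Laplacians `Δ_C = d_C ∘ d_C* + e_C* ∘ e_C` and `Δ_D = d_D ∘ d_D* + e_D* ∘ e_D`. -/
theorem stmt16 {C' C C'' D' D D'' : Type*}
    [NormedAddCommGroup C'] [InnerProductSpace ℝ C'] [FiniteDimensional ℝ C']
    [NormedAddCommGroup C] [InnerProductSpace ℝ C] [FiniteDimensional ℝ C]
    [NormedAddCommGroup C''] [InnerProductSpace ℝ C''] [FiniteDimensional ℝ C'']
    [NormedAddCommGroup D'] [InnerProductSpace ℝ D'] [FiniteDimensional ℝ D']
    [NormedAddCommGroup D] [InnerProductSpace ℝ D] [FiniteDimensional ℝ D]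
    [NormedAddCommGroup D''] [InnerProductSpace ℝ D''] [FiniteDimensional ℝ D'']
    (dC : C' →ₗ[ℝ] C) (eC : C →ₗ[ℝ] C'') (hC : eC.comp dC = 0)
    (dD : D' →ₗ[ℝ] D) (eD : D →ₗ[ℝ] D'') (hD : eD.comp dD = 0)
    (f' : C' →ₗ[ℝ] D') (f : C →ₗ[ℝ] D) (f'' : C'' →ₗ[ℝ] D'')
    (hfd : f.comp dC = dD.comp f') (hfe : f''.comp eC = eD.comp f) :
    ∃ hker : LinearMap.ker eC ≤ (LinearMap.ker eD).comap f,
      ∃ hcomap : (LinearMap.range dC).comap (LinearMap.ker eC).subtype ≤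
          ((LinearMap.range dD).comap (LinearMap.ker eD).subtype).comap
            (LinearMap.codRestrict (LinearMap.ker eD)
              (f.comp (LinearMap.ker eC).subtype) (fun x => hker x.2)),
        Module.finrank ℝ (LinearMap.range
          (Submodule.mapQ ((LinearMap.range dC).comap (LinearMap.ker eC).subtype)
            ((LinearMap.range dD).comap (LinearMap.ker eD).subtype)
            (LinearMap.codRestrict (LinearMap.ker eD)
              (f.comp (LinearMap.ker eC).subtype) (fun x => hker x.2))
            hcomap)) =
        Module.finrank ℝ (LinearMap.range
          (((LinearMap.ker (dD ∘ₗ LinearMap.adjoint dD + LinearMap.adjoint eD ∘ₗ eD)).subtype ∘ₗ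
              (Submodule.orthogonalProjectionOnto
                (LinearMap.ker (dD ∘ₗ LinearMap.adjoint dD + LinearMap.adjoint eD ∘ₗ eD))).toLinearMap) ∘ₗ
            f ∘ₗ
            ((LinearMap.ker (dC ∘ₗ LinearMap.adjoint dC + LinearMap.adjoint eC ∘ₗ eC)).subtype ∘ₗ
              (Submodule.orthogonalProjectionOnto
                (LinearMap.ker (dC ∘ₗ LinearMap.adjoint dC + LinearMap.adjoint eC ∘ₗ eC))).toLinearMap))) := by
  have hker : LinearMap.ker eC ≤ (LinearMap.ker eD).comap f := by
    intro x hx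
    have h1 : f'' (eC x) = eD (f x) := LinearMap.ext_iff.mp hfe x
    simp only [Submodule.mem_comap, LinearMap.mem_ker] at *
    rw [← h1, hx, map_zero]
  have hcomap : (LinearMap.range dC).comap (LinearMap.ker eC).subtype ≤
      ((LinearMap.range dD).comap (LinearMap.ker eD).subtype).comap
        (LinearMap.codRestrict (LinearMap.ker eD)
          (f.comp (LinearMap.ker eC).subtype) (fun x => hker x.2)) := by
    intro x hx
    simp only [Submodule.mem_comap, Submodule.coe_subtype, LinearMap.codRestrict_apply,
      LinearMap.comp_apply] at hx ⊢
    obtain ⟨y, hy⟩ := hx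
    refine ⟨f' y, ?_⟩
    have h1 : f (dC y) = dD (f' y) := LinearMap.ext_iff.mp hfd y
    rw [← h1, hy]
  refine ⟨hker, hcomap, ?_⟩
  set HC := LinearMap.ker (dC ∘ₗ LinearMap.adjoint dC + LinearMap.adjoint eC ∘ₗ eC) with hHC
  set HD := LinearMap.ker (dD ∘ₗ LinearMap.adjoint dD + LinearMap.adjoint eD ∘ₗ eD) with hHD
  have hHCeq : HC = LinearMap.ker eC ⊓ (LinearMap.range dC)ᗮ := by
    rw [hHC, aux16_ker_lap, aux16_ker_adjoint]
  have hHDeq : HD = LinearMap.ker eD ⊓ (LinearMap.range dD)ᗮ := by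
    rw [hHD, aux16_ker_lap, aux16_ker_adjoint]
  have hHC_le : HC ≤ LinearMap.ker eC := hHCeq ▸ inf_le_left
  have hHD_le : HD ≤ LinearMap.ker eD := hHDeq ▸ inf_le_left
  have hHD_orth : HD ≤ (LinearMap.range dD)ᗮ := hHDeq ▸ inf_le_right
  have hrdC : LinearMap.range dC ≤ LinearMap.ker eC := by
    rintro x ⟨y, rfl⟩
    exact LinearMap.mem_ker.mpr (LinearMap.ext_iff.mp hC y)
  have hrdD : LinearMap.range dD ≤ LinearMap.ker eD := by
    rintro x ⟨y, rfl⟩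
    exact LinearMap.mem_ker.mpr (LinearMap.ext_iff.mp hD y)
  have hodgeC : LinearMap.range dC ⊔ HC = LinearMap.ker eC := by
    rw [hHCeq, inf_comm]
    exact Submodule.sup_orthogonal_inf_of_hasOrthogonalProjection hrdC
  have hodgeD : LinearMap.range dD ⊔ HD = LinearMap.ker eD := by
    rw [hHDeq, inf_comm]
    exact Submodule.sup_orthogonal_inf_of_hasOrthogonalProjection hrdD
  set RC := (LinearMap.range dC).comap (LinearMap.ker eC).subtype with hRC
  set RD := (LinearMap.range dD).comap (LinearMap.ker eD).subtype with hRD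
  set g := LinearMap.codRestrict (LinearMap.ker eD)
      (f.comp (LinearMap.ker eC).subtype) (fun x => hker x.2) with hg
  set h : ↥HC →ₗ[ℝ] ↥HD :=
    (Submodule.orthogonalProjectionOnto HD).toLinearMap ∘ₗ f ∘ₗ HC.subtype with hh
  set ψ : ↥HD →ₗ[ℝ] (↥(LinearMap.ker eD) ⧸ RD) :=
    RD.mkQ ∘ₗ Submodule.inclusion hHD_le with hψ
  have hψinj : Function.Injective ψ := by
    intro x y hxy
    have hmem : Submodule.inclusion hHD_le x - Submodule.inclusion hHD_le y ∈ RD := by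
      have h2 : RD.mkQ (Submodule.inclusion hHD_le x)
          = RD.mkQ (Submodule.inclusion hHD_le y) := hxy
      rw [Submodule.mkQ_apply, Submodule.mkQ_apply, Submodule.Quotient.eq] at h2
      exact h2
    have hsub : (x : D) - (y : D) ∈ LinearMap.range dD := by
      simpa [hRD, Submodule.mem_comap] using hmem
    have horth : (x : D) - (y : D) ∈ (LinearMap.range dD)ᗮ :=
      hHD_orth (HD.sub_mem x.2 y.2)
    have hz : (x : D) - (y : D) = 0 := by
      have h3 : ⟪(x : D) - (y : D), (x : D) - (y : D)⟫ = 0 := horth _ hsub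
      exact inner_self_eq_zero.mp h3
    exact Subtype.ext (sub_eq_zero.mp hz)
  have hrleD : LinearMap.range dD ≤ HDᗮ :=
    le_trans (Submodule.le_orthogonal_orthogonal _) (Submodule.orthogonal_le hHD_orth)
  have hcomm : RD.mkQ ∘ₗ g ∘ₗ Submodule.inclusion hHC_le = ψ ∘ₗ h := by
    apply LinearMap.ext
    intro x
    simp only [LinearMap.comp_apply, hψ, Submodule.mkQ_apply]
    rw [Submodule.Quotient.eq]
    have hfx : f (x : C) ∈ LinearMap.ker eD := hker (hHC_le x.2)
    have hmemv : f (x : C) ∈ LinearMap.range dD ⊔ HD := by rw [hodgeD]; exact hfx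
    obtain ⟨r, hr, hv, hvmem, hsum⟩ := Submodule.mem_sup.mp hmemv
    have hproj : ((Submodule.orthogonalProjectionOnto HD (f (x : C))) : D) = hv := by
      rw [← hsum, map_add,
        Submodule.orthogonalProjectionOnto_apply_of_mem_orthogonal (hrleD hr),
        zero_add]
      exact congrArg _ (Submodule.orthogonalProjectionOnto_mem_subspace_eq_self ⟨hv, hvmem⟩)
    simp only [hRD, Submodule.mem_comap, Submodule.coe_subtype, AddSubgroupClass.coe_sub,
      hg, LinearMap.codRestrict_apply, LinearMap.comp_apply, hh, Submodule.coe_inclusion,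
      ContinuousLinearMap.coe_coe]
    rw [hproj, ← hsum, add_sub_cancel_right]
    exact hr
  have hr1 : LinearMap.range (Submodule.mapQ RC RD g hcomap)
      = LinearMap.range ((Submodule.mapQ RC RD g hcomap) ∘ₗ RC.mkQ) := by
    rw [LinearMap.range_comp, Submodule.range_mkQ, Submodule.map_top]
  have hr2 : (Submodule.mapQ RC RD g hcomap) ∘ₗ RC.mkQ = RD.mkQ ∘ₗ g :=
    Submodule.mapQ_mkQ RC RD g
  have hr3 : Submodule.map RD.mkQ (LinearMap.range g)
      = Submodule.map RD.mkQ (LinearMap.range (g ∘ₗ Submodule.inclusion hHC_le)) := by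
    refine le_antisymm ?_ (Submodule.map_mono (LinearMap.range_comp_le_range _ _))
    rintro z hz
    rw [Submodule.mem_map] at hz
    obtain ⟨w, ⟨x, rfl⟩, rfl⟩ := hz
    have hx : (x : C) ∈ LinearMap.range dC ⊔ HC := by rw [hodgeC]; exact x.2
    obtain ⟨r, hr', hv, hvmem, hsum⟩ := Submodule.mem_sup.mp hx
    have hxeq : x = (⟨r, hrdC hr'⟩ : LinearMap.ker eC)
        + Submodule.inclusion hHC_le ⟨hv, hvmem⟩ := by
      apply Subtype.ext
      simp [← hsum]
    rw [hxeq, map_add, map_add]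
    have hzero : RD.mkQ (g ⟨r, hrdC hr'⟩) = 0 := by
      rw [Submodule.mkQ_apply, Submodule.Quotient.mk_eq_zero]
      exact hcomap (show (⟨r, hrdC hr'⟩ : LinearMap.ker eC) ∈ RC from hr')
    rw [hzero, zero_add]
    exact Submodule.mem_map_of_mem ⟨⟨hv, hvmem⟩, rfl⟩
  have hL : Module.finrank ℝ (LinearMap.range (Submodule.mapQ RC RD g hcomap))
      = Module.finrank ℝ (LinearMap.range h) := by
    have e1 : LinearMap.range (Submodule.mapQ RC RD g hcomap)
        = Submodule.map ψ (LinearMap.range h) := by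
      rw [hr1, hr2, LinearMap.range_comp, hr3, ← LinearMap.range_comp, hcomm,
        LinearMap.range_comp]
    rw [e1]
    exact (Submodule.equivMapOfInjective ψ hψinj _).finrank_eq.symm
  -- RHS
  have hPC : LinearMap.range (HC.subtype ∘ₗ (Submodule.orthogonalProjectionOnto HC).toLinearMap) = HC := by
    apply le_antisymm
    · rw [LinearMap.range_comp]
      exact Submodule.map_subtype_le _ _
    · intro x hx
      refine ⟨x, ?_⟩
      simp only [LinearMap.comp_apply, ContinuousLinearMap.coe_coe]
      rw [show (Submodule.orthogonalProjectionOnto HC) x = ⟨x, hx⟩ from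
        Submodule.orthogonalProjectionOnto_mem_subspace_eq_self ⟨x, hx⟩]
      rfl
  have hrangeh : LinearMap.range h
      = Submodule.map (Submodule.orthogonalProjectionOnto HD).toLinearMap (Submodule.map f HC) := by
    rw [hh, LinearMap.range_comp, LinearMap.range_comp, Submodule.range_subtype]
  have hR : Module.finrank ℝ (LinearMap.range
      ((HD.subtype ∘ₗ (Submodule.orthogonalProjectionOnto HD).toLinearMap) ∘ₗ
        f ∘ₗ (HC.subtype ∘ₗ (Submodule.orthogonalProjectionOnto HC).toLinearMap)))
      = Module.finrank ℝ (LinearMap.range h) := by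
    have e2 : LinearMap.range
        ((HD.subtype ∘ₗ (Submodule.orthogonalProjectionOnto HD).toLinearMap) ∘ₗ
          f ∘ₗ (HC.subtype ∘ₗ (Submodule.orthogonalProjectionOnto HC).toLinearMap))
        = Submodule.map HD.subtype (LinearMap.range h) := by
      rw [LinearMap.range_comp, LinearMap.range_comp, hPC, Submodule.map_comp, hrangeh]
    rw [e2]
    exact (Submodule.equivMapOfInjective HD.subtype (Submodule.injective_subtype HD)
      _).finrank_eq.symm
  rw [hL, ← hR]
end

section
/- Let x_0, …, x_n be affinely independent points in ℝ^D and f : ℝ^D → ℝ an affine map with f(x_0) < f(x_1) < ⋯ < f(x_n). Fix 0 ≤ i ≤ n−1 and s with f(x_i) ≤ s < f(x_{i+1}). Set K = conv{x_0, …, x_n} ∩ {x : f(x) ≤ s} and A = conv{x_0, …, x_i}. Then A ⊆ K and A is a deformation retract of K: there is a continuous map H : K × [0,1] → K with H(x,0) = x for all x ∈ K, H(x,1) ∈ A for all x ∈ K, and H(a,t) = a for all a ∈ A and t ∈ [0,1]. -/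
/-- An affine map into a module preserves convex combinations of two points. -/
lemma stmt18_affine_comb {E F : Type*} [AddCommGroup E] [Module ℝ E] [AddCommGroup F]
    [Module ℝ F] (φ : E →ᵃ[ℝ] F) (y z : E) (a b : ℝ) (hab : a + b = 1) :
    φ (a • y + b • z) = a • φ y + b • φ z := by
  have ha : a = 1 - b := by linarith
  subst ha
  rw [← AffineMap.lineMap_apply_module, AffineMap.apply_lineMap,
    AffineMap.lineMap_apply_module]

theorem stmt18 (D n : ℕ) (x : Fin (n + 1) → EuclideanSpace ℝ (Fin D))
    (hind : AffineIndependent ℝ x)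
    (f : EuclideanSpace ℝ (Fin D) →ᵃ[ℝ] ℝ)
    (hmono : StrictMono fun j : Fin (n + 1) => f (x j))
    (i : Fin n) (s : ℝ)
    (hs1 : f (x i.castSucc) ≤ s) (hs2 : s < f (x i.succ))
    (K A : Set (EuclideanSpace ℝ (Fin D)))
    (hK : K = convexHull ℝ (Set.range x) ∩ {y | f y ≤ s})
    (hA : A = convexHull ℝ (x '' {j : Fin (n + 1) | j ≤ i.castSucc})) :
    A ⊆ K ∧
      ∃ H : K × (Set.Icc (0 : ℝ) 1) → K,
        Continuous H ∧
        (∀ p : K, H (p, ⟨0, by norm_num⟩) = p) ∧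
        (∀ p : K, (H (p, ⟨1, by norm_num⟩) : EuclideanSpace ℝ (Fin D)) ∈ A) ∧
        (∀ (p : K) (t : Set.Icc (0 : ℝ) 1), (p : EuclideanSpace ℝ (Fin D)) ∈ A →
          H (p, t) = p) := by
  classical
  -- extend to an affine basis
  obtain ⟨T, hsT, hTind, hTspan⟩ :=
    exists_subset_affineIndependent_affineSpan_eq_top hind.range
  let b : AffineBasis T ℝ (EuclideanSpace ℝ (Fin D)) :=
    ⟨fun p => (p : EuclideanSpace ℝ (Fin D)), hTind, by rwa [Subtype.range_coe]⟩
  have hmemT : ∀ j, x j ∈ T := fun j => hsT ⟨j, rfl⟩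
  let emb : Fin (n + 1) → T := fun j => ⟨x j, hmemT j⟩
  have hembinj : Function.Injective emb := fun j k h =>
    hind.injective (congrArg Subtype.val h)
  let c : Fin (n + 1) → (EuclideanSpace ℝ (Fin D) →ᵃ[ℝ] ℝ) := fun j => b.coord (emb j)
  have hc : ∀ j k, c j (x k) = if j = k then 1 else 0 := by
    intro j k
    have hbk : b (emb k) = x k := rfl
    rw [← hbk]
    rw [b.coord_apply]
    simp [hembinj.eq_iff]
  have hmono' : Monotone fun j : Fin (n + 1) => f (x j) := hmono.monotone
  -- basic facts on the big hull, by convexity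
  have hnonneg : ∀ j, ∀ y ∈ convexHull ℝ (Set.range x), 0 ≤ c j y := by
    intro j
    have h : convexHull ℝ (Set.range x) ⊆ (c j) ⁻¹' Set.Ici 0 := by
      apply convexHull_min
      · rintro _ ⟨k, rfl⟩
        simp only [Set.mem_preimage, Set.mem_Ici, hc]
        split_ifs <;> norm_num
      · exact (convex_Ici (0 : ℝ)).affine_preimage (c j)
    exact fun y hy => h hy
  have hsum1 : ∀ y ∈ convexHull ℝ (Set.range x), ∑ j, c j y = 1 := by
    have h : convexHull ℝ (Set.range x) ⊆ {y | ∑ j, c j y = 1} := by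
      apply convexHull_min
      · rintro _ ⟨k, rfl⟩
        simp [hc]
      · intro y hy z hz a b' ha hb hab
        have hcj : ∀ j, c j (a • y + b' • z) = a • c j y + b' • c j z := fun j =>
          stmt18_affine_comb (c j) y z a b' hab
        simp only [Set.mem_setOf_eq] at hy hz ⊢
        simp only [hcj, smul_eq_mul, Finset.sum_add_distrib, ← Finset.mul_sum, hy, hz]
        linarith
    exact fun y hy => h hy
  have hrep : ∀ y ∈ convexHull ℝ (Set.range x), ∑ j, c j y • x j = y := by
    have h : convexHull ℝ (Set.range x) ⊆ {y | ∑ j, c j y • x j = y} := by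
      apply convexHull_min
      · rintro _ ⟨k, rfl⟩
        simp only [Set.mem_setOf_eq, hc, ite_smul, one_smul, zero_smul]
        rw [Finset.sum_ite_eq' Finset.univ k]
        simp
      · intro y hy z hz a b' ha hb hab
        have hcj : ∀ j, c j (a • y + b' • z) = a • c j y + b' • c j z := fun j =>
          stmt18_affine_comb (c j) y z a b' hab
        simp only [Set.mem_setOf_eq] at hy hz ⊢
        simp only [hcj, smul_eq_mul, add_smul, mul_smul, Finset.sum_add_distrib,
          ← Finset.smul_sum, hy, hz]
    exact fun y hy => h hy
  have hfval : ∀ y ∈ convexHull ℝ (Set.range x), f y = ∑ j, c j y * f (x j) := by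
    have h : convexHull ℝ (Set.range x) ⊆ {y | f y = ∑ j, c j y * f (x j)} := by
      apply convexHull_min
      · rintro _ ⟨k, rfl⟩
        simp [hc]
      · intro y hy z hz a b' ha hb hab
        have hcj : ∀ j, c j (a • y + b' • z) = a • c j y + b' • c j z := fun j =>
          stmt18_affine_comb (c j) y z a b' hab
        have hfc : f (a • y + b' • z) = a • f y + b' • f z :=
          stmt18_affine_comb f y z a b' hab
        simp only [Set.mem_setOf_eq] at hy hz ⊢
        simp only [hcj, hfc, smul_eq_mul, add_mul, Finset.sum_add_distrib, mul_assoc,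
          ← Finset.mul_sum, hy, hz]
    exact fun y hy => h hy
  -- coordinates above i vanish on A
  have hAsub : A ⊆ convexHull ℝ (Set.range x) := by
    rw [hA]
    exact convexHull_mono (Set.image_subset_range _ _)
  have hAzero : ∀ j, i.castSucc < j → ∀ y ∈ A, c j y = 0 := by
    intro j hj
    have h : convexHull ℝ (x '' {k : Fin (n + 1) | k ≤ i.castSucc}) ⊆ {y | c j y = 0} := by
      apply convexHull_min
      · rintro _ ⟨k, hk, rfl⟩
        simp only [Set.mem_setOf_eq] at hk
        have hne : j ≠ k := fun h => absurd (h ▸ hj) (not_lt.mpr hk)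
        simp [hc, hne]
      · intro y hy z hz a b' ha hb hab
        have := stmt18_affine_comb (c j) y z a b' hab
        simp only [Set.mem_setOf_eq] at hy hz ⊢
        simp [this, hy, hz]
    intro y hy
    exact h (hA ▸ hy)
  -- the halfspace is convex
  have hhalf : Convex ℝ {y : EuclideanSpace ℝ (Fin D) | f y ≤ s} := by
    intro y hy z hz a b' ha hb hab
    have := stmt18_affine_comb f y z a b' hab
    simp only [Set.mem_setOf_eq] at hy hz ⊢
    rw [this]
    simp only [smul_eq_mul]
    have h1 : a * f y ≤ a * s := mul_le_mul_of_nonneg_left hy ha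
    have h2 : b' * f z ≤ b' * s := mul_le_mul_of_nonneg_left hz hb
    have h3 : a * s + b' * s = s := by rw [← add_mul, hab, one_mul]
    linarith
  have hKconv : Convex ℝ K := by
    rw [hK]; exact (convex_convexHull ℝ _).inter hhalf
  -- A ⊆ K
  have hAK : A ⊆ K := by
    rw [hA, hK]
    apply Set.subset_inter
    · exact convexHull_mono (Set.image_subset_range _ _)
    · apply convexHull_min _ hhalf
      rintro _ ⟨k, hk, rfl⟩
      simp only [Set.mem_setOf_eq] at hk ⊢
      exact le_trans (hmono' hk) hs1
  -- the retraction
  set I : Finset (Fin (n + 1)) := Finset.Iic i.castSucc with hI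
  set g : EuclideanSpace ℝ (Fin D) → ℝ := fun y => ∑ j ∈ I, c j y with hg
  set q : EuclideanSpace ℝ (Fin D) → EuclideanSpace ℝ (Fin D) :=
    fun y => ∑ j ∈ I, c j y • x j with hq
  set r : EuclideanSpace ℝ (Fin D) → EuclideanSpace ℝ (Fin D) :=
    fun y => (g y)⁻¹ • q y with hr
  have hgpos : ∀ y ∈ K, 0 < g y := by
    intro y hy
    rw [hK] at hy
    obtain ⟨hy1, hy2⟩ := hy
    by_contra hle
    push_neg at hle
    have hzero : ∀ j ∈ I, c j y = 0 :=
      (Finset.sum_eq_zero_iff_of_nonneg (fun j _ => hnonneg j y hy1)).mp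
        (le_antisymm hle (Finset.sum_nonneg fun j _ => hnonneg j y hy1))
    have hcompl : ∑ j ∈ Iᶜ, c j y = 1 := by
      have h := hsum1 y hy1
      rw [← Finset.sum_add_sum_compl I, Finset.sum_eq_zero hzero] at h
      linarith
    have hge : f (x i.succ) ≤ f y := by
      have h1 : f y = ∑ j ∈ Iᶜ, c j y * f (x j) := by
        rw [hfval y hy1, ← Finset.sum_add_sum_compl I,
          Finset.sum_eq_zero fun j hj => by rw [hzero j hj, zero_mul]]
        ring
      have h2 : ∀ j ∈ Iᶜ, c j y * f (x i.succ) ≤ c j y * f (x j) := by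
        intro j hj
        have hjlt : i.castSucc < j := by
          simpa [hI, Finset.mem_compl, Finset.mem_Iic, not_le] using hj
        have hle' : i.succ ≤ j := Fin.castSucc_lt_iff_succ_le.mp hjlt
        exact mul_le_mul_of_nonneg_left (hmono' hle') (hnonneg j y hy1)
      calc f (x i.succ) = (∑ j ∈ Iᶜ, c j y) * f (x i.succ) := by rw [hcompl, one_mul]
        _ = ∑ j ∈ Iᶜ, c j y * f (x i.succ) := by rw [Finset.sum_mul]
        _ ≤ ∑ j ∈ Iᶜ, c j y * f (x j) := Finset.sum_le_sum h2
        _ = f y := h1.symm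
    have hle2 : f y ≤ s := hy2
    linarith
  have hrA : ∀ y ∈ K, r y ∈ A := by
    intro y hy
    have hy1 : y ∈ convexHull ℝ (Set.range x) := by rw [hK] at hy; exact hy.1
    rw [hA]
    have h := Finset.centerMass_mem_convexHull (R := ℝ) I
      (w := fun j => c j y) (fun j _ => hnonneg j y hy1) (hgpos y hy)
      (z := x) (s := x '' {j : Fin (n + 1) | j ≤ i.castSucc})
      (fun j hj => ⟨j, by simpa [hI, Finset.mem_Iic] using hj, rfl⟩)
    rwa [Finset.centerMass] at h
  have hrfix : ∀ y ∈ A, r y = y := by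
    intro y hy
    have hy1 : y ∈ convexHull ℝ (Set.range x) := hAsub hy
    have hzc : ∀ j ∈ Iᶜ, c j y = 0 := by
      intro j hj
      have hjlt : i.castSucc < j := by
        simpa [hI, Finset.mem_compl, Finset.mem_Iic, not_le] using hj
      exact hAzero j hjlt y hy
    have hg1 : g y = 1 := by
      have h := hsum1 y hy1
      rw [← Finset.sum_add_sum_compl I, Finset.sum_eq_zero hzc, add_zero] at h
      exact h
    have hqy : q y = y := by
      have h := hrep y hy1
      rw [← Finset.sum_add_sum_compl I,
        Finset.sum_eq_zero (s := Iᶜ) (f := fun j => c j y • x j)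
          (fun j hj => by simp [hzc j hj]), add_zero] at h
      exact h
    simp [hr, hg1, hqy]
  -- continuity
  have hcc : ∀ j, Continuous (c j) := fun j => (c j).continuous_of_finiteDimensional
  have hcg : Continuous g := continuous_finset_sum _ fun j _ => hcc j
  have hcq : Continuous q :=
    continuous_finset_sum _ fun j _ => (hcc j).smul continuous_const
  have hcr : ContinuousOn r K :=
    (hcg.continuousOn.inv₀ fun y hy => (hgpos y hy).ne').smul hcq.continuousOn
  refine ⟨hAK, ?_⟩
  have hmemK : ∀ (p : K) (t : Set.Icc (0 : ℝ) 1),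
      (1 - (t : ℝ)) • (p : EuclideanSpace ℝ (Fin D)) + (t : ℝ) • r p ∈ K := by
    intro p t
    exact hKconv p.2 (hAK (hrA p p.2)) (by have := t.2.2; linarith) t.2.1 (by ring)
  refine ⟨fun pt => ⟨(1 - (pt.2 : ℝ)) • (pt.1 : EuclideanSpace ℝ (Fin D)) +
    (pt.2 : ℝ) • r pt.1, hmemK pt.1 pt.2⟩, ?_, ?_, ?_, ?_⟩
  · apply Continuous.subtype_mk
    have h1 : Continuous fun pt : K × Set.Icc (0 : ℝ) 1 =>
        ((pt.1 : EuclideanSpace ℝ (Fin D))) := continuous_subtype_val.comp continuous_fst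
    have h2 : Continuous fun pt : K × Set.Icc (0 : ℝ) 1 => ((pt.2 : ℝ)) :=
      continuous_subtype_val.comp continuous_snd
    have h3 : Continuous fun pt : K × Set.Icc (0 : ℝ) 1 =>
        r (pt.1 : EuclideanSpace ℝ (Fin D)) :=
      hcr.comp_continuous h1 fun pt => pt.1.2
    exact (((continuous_const.sub h2)).smul h1).add (h2.smul h3)
  · intro p
    apply Subtype.ext
    simp
  · intro p
    simpa using hrA p p.2
  · intro p t hp
    apply Subtype.ext
    simp only [hrfix p hp]
    rw [← add_smul]
    simp
end

section
/- Let x_0, …, x_{n-1} ∈ ℝ^D, let B = conv{x_0, …, x_{n-1}} be their convex hull, and let x_n ∈ ℝ^D be a point not lying in the affine span of {x_0, …, x_{n-1}} (so that conv(B ∪ {x_n}) is a cone with apex x_n and base B). Let f : ℝ^D → ℝ be an affine map with f(x_j) ≤ f(x_{n-1}) for all 0 ≤ j ≤ n−1 and f(x_{n-1}) < f(x_n). Then for every s with f(x_{n-1}) ≤ s < f(x_n), the base B is a deformation retract of the sublevel set K = conv({x_0,…,x_{n-1},x_n}) ∩ {x : f(x) ≤ s}: there is a continuous map H : K × [0,1]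 → K with H(x,0) = x for all x ∈ K, H(x,1) ∈ B for all x ∈ K, and H(b,t) = b for all b ∈ B and t ∈ [0,1]. -/
set_option maxHeartbeats 1000000 in
/-- Let `B = conv{x 0, …, x (n-1)}` and let `apex` be a point outside the
affine span of the `x j` (so `conv(B ∪ {apex})` is a cone with apex `apex` and base
`B`). Let `f` be affine with `f (x j) ≤ f (x (n-1))` for all `j` and
`f (x (n-1)) < f apex`. Then for every `s` with `f (x (n-1)) ≤ s < f apex`, the base
`B` is contained in and is a deformation retract of the sublevel set
`K = conv({x 0, …, x (n-1), apex}) ∩ {f ≤ s}`. -/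
theorem stmt19 (D n : ℕ) (hn : 0 < n)
    (x : Fin n → EuclideanSpace ℝ (Fin D)) (apex : EuclideanSpace ℝ (Fin D))
    (hapex : apex ∉ affineSpan ℝ (Set.range x))
    (f : EuclideanSpace ℝ (Fin D) →ᵃ[ℝ] ℝ)
    (hle : ∀ j : Fin n, f (x j) ≤ f (x ⟨n - 1, Nat.sub_lt hn Nat.one_pos⟩))
    (hlt : f (x ⟨n - 1, Nat.sub_lt hn Nat.one_pos⟩) < f apex)
    (s : ℝ)
    (hs1 : f (x ⟨n - 1, Nat.sub_lt hn Nat.one_pos⟩) ≤ s) (hs2 : s < f apex)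
    (B K : Set (EuclideanSpace ℝ (Fin D)))
    (hB : B = convexHull ℝ (Set.range x))
    (hK : K = convexHull ℝ (Set.range x ∪ {apex}) ∩ {y | f y ≤ s}) :
    B ⊆ K ∧
      ∃ H : K × (Set.Icc (0 : ℝ) 1) → K,
        Continuous H ∧
        (∀ p : K, H (p, ⟨0, by norm_num⟩) = p) ∧
        (∀ p : K, (H (p, ⟨1, by norm_num⟩) : EuclideanSpace ℝ (Fin D)) ∈ B) ∧
        (∀ (p : K) (t : Set.Icc (0 : ℝ) 1), (p : EuclideanSpace ℝ (Fin D)) ∈ B →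
          H (p, t) = p) := by
  have hnefin : Nonempty (Fin n) := ⟨⟨0, hn⟩⟩
  set p0 : EuclideanSpace ℝ (Fin D) := x ⟨n - 1, Nat.sub_lt hn Nat.one_pos⟩ with hp0def
  have hne : (Set.range x).Nonempty := Set.range_nonempty x
  have hp0 : p0 ∈ affineSpan ℝ (Set.range x) :=
    subset_affineSpan ℝ _ (Set.mem_range_self _)
  have hfB : ∀ b ∈ convexHull ℝ (Set.range x), f b ≤ s := by
    intro b hb
    have hconv : Convex ℝ (f ⁻¹' Set.Iic s) := (convex_Iic s).affine_preimage f
    have hsub : Set.range x ⊆ f ⁻¹' Set.Iic s := by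
      rintro _ ⟨j, rfl⟩
      exact le_trans (hle j) hs1
    exact convexHull_min hsub hconv hb
  -- B ⊆ K
  have hBK : B ⊆ K := by
    intro b hb
    rw [hB] at hb
    rw [hK]
    exact ⟨convexHull_mono Set.subset_union_left hb, hfB b hb⟩
  -- the separating linear functional
  have hv : apex - p0 ∉ (affineSpan ℝ (Set.range x)).direction := by
    intro h
    apply hapex
    have := AffineSubspace.vadd_mem_of_mem_direction h hp0
    simpa using this
  obtain ⟨φ, hφv, hφker⟩ :=
    Submodule.exists_dual_map_eq_bot_of_notMem hv inferInstance
  set c0 : ℝ := φ (apex - p0) with hc0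
  set u : EuclideanSpace ℝ (Fin D) → ℝ := fun y => c0⁻¹ * φ (y - p0) with hu
  have hφ0 : ∀ w ∈ (affineSpan ℝ (Set.range x)).direction, φ w = 0 := by
    intro w hw
    have : φ w ∈ ((affineSpan ℝ (Set.range x)).direction.map φ) :=
      Submodule.mem_map_of_mem hw
    rw [hφker] at this
    simpa using this
  have hu0 : ∀ q ∈ affineSpan ℝ (Set.range x), u q = 0 := by
    intro q hq
    have hqd : q - p0 ∈ (affineSpan ℝ (Set.range x)).direction := by
      have := AffineSubspace.vsub_mem_direction hq hp0
      simpa using this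
    show c0⁻¹ * φ (q - p0) = 0
    rw [hφ0 _ hqd, mul_zero]
  have huapex : u apex = 1 := by
    simp only [hu]
    rw [← hc0, inv_mul_cancel₀ hφv]
  have huB : ∀ b ∈ convexHull ℝ (Set.range x), u b = 0 := fun b hb =>
    hu0 b (convexHull_subset_affineSpan _ hb)
  have hu_combo : ∀ (a b : ℝ) (q r : EuclideanSpace ℝ (Fin D)), a + b = 1 →
      u (a • q + b • r) = a * u q + b * u r := by
    intro a b q r hab
    have hb' : b = 1 - a := by linarith
    subst hb'
    simp only [hu]
    rw [show a • q + (1 - a) • r - p0 = a • (q - p0) + (1 - a) • (r - p0) by module]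
    rw [map_add, map_smul, map_smul]
    simp only [smul_eq_mul]
    ring
  have hu_cont : Continuous u := by
    have hφc : Continuous φ := φ.continuous_of_finiteDimensional
    exact continuous_const.mul (hφc.comp (continuous_id.sub continuous_const))
  -- decomposition of points of K
  have hdec : ∀ y ∈ K, ∃ b ∈ convexHull ℝ (Set.range x),
      0 ≤ u y ∧ u y < 1 ∧ y = (1 - u y) • b + (u y) • apex := by
    intro y hy
    rw [hK] at hy
    obtain ⟨hy1, hy2⟩ := hy
    rw [convexHull_union hne (Set.singleton_nonempty _), convexHull_singleton,
      mem_convexJoin] at hy1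
    obtain ⟨b, hb, a, ha, hseg⟩ := hy1
    rw [Set.mem_singleton_iff] at ha
    rw [ha] at hseg
    obtain ⟨d, c, hd, hc, hdc, hyeq⟩ := hseg
    have huy : u y = c := by
      rw [← hyeq, hu_combo d c b apex hdc, huB b hb, huapex]
      ring
    have hfy : f y = d * f b + c * f apex := by
      rw [← hyeq]
      exact Convex.combo_affine_apply hdc
    have hfb : f b ≤ s := hfB b hb
    have hys : f y ≤ s := hy2
    have hclt : c < 1 := by
      by_contra h
      push_neg at h
      have hd0 : d = 0 := by linarith
      have hc1 : c = 1 := by linarith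
      rw [hd0, hc1] at hfy
      simp at hfy
      linarith
    refine ⟨b, hb, huy ▸ hc, huy ▸ hclt, ?_⟩
    rw [huy, show (1:ℝ) - c = d by linarith, ← hyeq]
  -- the homotopy formula
  set F : EuclideanSpace ℝ (Fin D) → ℝ → EuclideanSpace ℝ (Fin D) :=
    fun y t => y + ((t * u y) / (1 - u y)) • (y - apex) with hF
  have hult : ∀ y ∈ K, u y < 1 := by
    intro y hy
    obtain ⟨b, hb, _, h, _⟩ := hdec y hy
    exact h
  have hFval : ∀ y ∈ K, ∃ b ∈ convexHull ℝ (Set.range x),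
      0 ≤ u y ∧ u y < 1 ∧
      ∀ t : ℝ, F y t = ((1 - u y) + t * u y) • b + ((1 - t) * u y) • apex := by
    intro y hy
    obtain ⟨b, hb, hc0', hc1, hyeq⟩ := hdec y hy
    refine ⟨b, hb, hc0', hc1, fun t => ?_⟩
    simp only [hF]
    generalize hg : u y = c at hc0' hc1 hyeq ⊢
    subst hyeq
    have hdne : (1 : ℝ) - c ≠ 0 := by linarith
    rw [show (1 - c) • b + c • apex - apex = (1 - c) • (b - apex) by module,
      smul_smul, div_mul_cancel₀ _ hdne]
    module
  have hmemK : ∀ y ∈ K, ∀ t : ℝ, 0 ≤ t → t ≤ 1 → F y t ∈ K := by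
    intro y hy t ht0 ht1
    obtain ⟨b, hb, hc0', hc1, hFeq⟩ := hFval y hy
    set c := u y
    have hb' : b ∈ convexHull ℝ (Set.range x ∪ {apex}) :=
      convexHull_mono Set.subset_union_left hb
    have hapex' : apex ∈ convexHull ℝ (Set.range x ∪ {apex}) :=
      subset_convexHull _ _ (Set.mem_union_right _ rfl)
    have hA : (0:ℝ) ≤ (1 - c) + t * c := by nlinarith
    have hB2 : (0:ℝ) ≤ (1 - t) * c := by nlinarith
    have hsum : ((1 - c) + t * c) + ((1 - t) * c) = 1 := by ring
    have hyeq : y = (1 - c) • b + c • apex := by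
      have h0 := hFeq 0
      simp only [hF, zero_mul, zero_div, zero_smul, add_zero, sub_zero, one_mul] at h0
      exact h0
    have hfy : f y = (1 - c) * f b + c * f apex := by
      rw [hyeq]
      exact Convex.combo_affine_apply (by ring)
    have hfF : f (F y t) = ((1 - c) + t * c) * f b + ((1 - t) * c) * f apex := by
      rw [hFeq t]
      exact Convex.combo_affine_apply hsum
    have hys : f y ≤ s := by rw [hK] at hy; exact hy.2
    have hfb : f b ≤ s := hfB b hb
    rw [hK]
    refine ⟨?_, ?_⟩
    · rw [hFeq t]
      exact (convex_convexHull ℝ _) hb' hapex' hA hB2 hsum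
    · show f (F y t) ≤ s
      rw [hfF]
      rw [hfy] at hys
      nlinarith [mul_nonneg (mul_nonneg ht0 hc0') (sub_nonneg.2 (le_of_lt (lt_of_le_of_lt hfb hs2)))]
  have hFone : ∀ y ∈ K, F y 1 ∈ B := by
    intro y hy
    obtain ⟨b, hb, hc0', hc1, hFeq⟩ := hFval y hy
    have := hFeq 1
    rw [hB]
    rw [this]
    have h1 : ((1 - u y) + 1 * u y) = (1:ℝ) := by ring
    have h2 : ((1:ℝ) - 1) * u y = 0 := by ring
    rw [h1, h2, one_smul, zero_smul, add_zero]
    exact hb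
  refine ⟨hBK, ?_⟩
  refine ⟨fun q => ⟨F q.1.1 q.2.1, hmemK q.1.1 q.1.2 q.2.1 q.2.2.1 q.2.2.2⟩, ?_, ?_, ?_, ?_⟩
  · apply Continuous.subtype_mk
    have h1 : Continuous fun q : K × (Set.Icc (0:ℝ) 1) => (q.1 : EuclideanSpace ℝ (Fin D)) :=
      continuous_subtype_val.comp continuous_fst
    have h2 : Continuous fun q : K × (Set.Icc (0:ℝ) 1) => (q.2 : ℝ) :=
      continuous_subtype_val.comp continuous_snd
    have hucomp : Continuous fun q : K × (Set.Icc (0:ℝ) 1) => u (q.1 : EuclideanSpace ℝ (Fin D)) :=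
      hu_cont.comp h1
    have hdiv : Continuous fun q : K × (Set.Icc (0:ℝ) 1) =>
        ((q.2 : ℝ) * u (q.1 : EuclideanSpace ℝ (Fin D))) / (1 - u (q.1 : EuclideanSpace ℝ (Fin D))) := by
      apply Continuous.div (h2.mul hucomp) (continuous_const.sub hucomp)
      intro q
      have := hult q.1.1 q.1.2
      intro hzero
      have : u (q.1 : EuclideanSpace ℝ (Fin D)) = 1 := by linarith [sub_eq_zero.mp hzero]
      linarith [hult q.1.1 q.1.2]
    exact h1.add (hdiv.smul (h1.sub continuous_const))
  · intro p
    apply Subtype.ext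
    show F p.1 0 = p.1
    simp [hF]
  · intro p
    exact hFone p.1 p.2
  · intro p t hpB
    apply Subtype.ext
    show F p.1 t.1 = p.1
    have : u p.1 = 0 := by
      rw [hB] at hpB
      exact huB _ hpB
    simp [hF, this]
end
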